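/- arXiv:1608.00128 — 3 statements merged into one kernel-verified Lean document; each statement's English description precedes it below -/
import Mathlib

section
/- For 1 < α < 2 and x ∈ (0,1), the left Riemann–Liouville fractional integral of order 2−α of the function k(s) = s^{α/2−1}(1−s)^{α/2−1} satisfies: (1/Γ(2−α)) ∫₀ˣ (x−s)^{1−α} s^{α/2−1} (1−s)^{α/2−1} ds = (Γ(α/2)/Γ(1−α/2)) ∫₀ˣ s^{−α/2} (1−s)^{−α/2} ds. -/
open MeasureTheory Set intervalIntegral
open scoped ENNReal

noncomputable def betaR (p q : ℝ) : ℝ := Real.Gamma p * Real.Gamma q / Real.Gamma (p+q)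



lemma beta_intg {p q : ℝ} (hp : 0 < p) (hq : 0 < q) :
    IntegrableOn (fun t : ℝ => t ^ (p-1) * (1-t) ^ (q-1)) (Ioo 0 1) := by
  have h := Complex.betaIntegral_convergent (u := (p:ℂ)) (v := (q:ℂ)) (by simpa using hp) (by simpa using hq)
  rw [intervalIntegrable_iff_integrableOn_Ioo_of_le zero_le_one] at h
  have h2 : IntegrableOn (fun t : ℝ => ((t ^ (p-1) * (1-t) ^ (q-1) : ℝ) : ℂ)) (Ioo 0 1) := by
    apply h.congr_fun ?_ measurableSet_Ioo
    intro t ht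
    push_cast
    rw [Complex.ofReal_cpow ht.1.le, Complex.ofReal_cpow (by linarith [ht.2] : (0:ℝ) ≤ 1 - t)]
    push_cast
    ring
  simpa [IntegrableOn] using h2.re

lemma beta_eval {p q : ℝ} (hp : 0 < p) (hq : 0 < q) :
    ∫ t in Ioo (0:ℝ) 1, t ^ (p-1) * (1-t) ^ (q-1) = betaR p q := by
  have key : Complex.Gamma p * Complex.Gamma q = Complex.Gamma (p+q) * Complex.betaIntegral p q :=
    Complex.Gamma_mul_Gamma_eq_betaIntegral (by simpa using hp) (by simpa using hq)
  have hbeta : Complex.betaIntegral p q = ((∫ t in Ioo (0:ℝ) 1, t ^ (p-1) * (1-t) ^ (q-1) : ℝ) : ℂ) := by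
    rw [Complex.betaIntegral]
    rw [← MeasureTheory.integral_Ioc_eq_integral_Ioo, ← intervalIntegral.integral_of_le zero_le_one,
      ← intervalIntegral.integral_ofReal]
    apply intervalIntegral.integral_congr
    intro t ht
    rw [uIcc_of_le zero_le_one] at ht
    push_cast
    rw [Complex.ofReal_cpow ht.1, Complex.ofReal_cpow (by linarith [ht.2] : (0:ℝ) ≤ 1 - t)]
    push_cast
    ring
  rw [hbeta, Complex.Gamma_ofReal, Complex.Gamma_ofReal, ← Complex.ofReal_add, Complex.Gamma_ofReal,
    ← Complex.ofReal_mul, ← Complex.ofReal_mul] at key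
  have := Complex.ofReal_injective key
  have hG : Real.Gamma (p+q) ≠ 0 := (Real.Gamma_pos_of_pos (by linarith)).ne'
  rw [betaR]
  field_simp
  linarith [this]


lemma beta_intg0 {p q : ℝ} (hp : -1 < p) (hq : -1 < q) :
    IntegrableOn (fun t : ℝ => t ^ p * (1-t) ^ q) (Ioo 0 1) := by
  have h := Complex.betaIntegral_convergent (u := ((p+1:ℝ):ℂ)) (v := ((q+1:ℝ):ℂ))
    (by simpa using by linarith) (by simpa using by linarith)
  rw [intervalIntegrable_iff_integrableOn_Ioo_of_le zero_le_one] at h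
  have h2 : IntegrableOn (fun t : ℝ => ((t ^ p * (1-t) ^ q : ℝ) : ℂ)) (Ioo 0 1) := by
    apply h.congr_fun ?_ measurableSet_Ioo
    intro t ht
    dsimp only
    rw [Complex.ofReal_mul, Complex.ofReal_cpow ht.1.le, Complex.ofReal_cpow (by linarith [ht.2] : (0:ℝ) ≤ 1 - t)]
    push_cast
    ring_nf
  simpa [IntegrableOn] using h2.re

lemma affine_deriv (a b : ℝ) (w : ℝ) : HasDerivAt (fun w : ℝ => (b-a) * w + a) (b-a) w := by
  simpa using ((hasDerivAt_id w).const_mul (b-a)).add_const a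

lemma affine_image {a b : ℝ} (hab : a < b) : (fun w : ℝ => (b-a) * w + a) '' Ioo 0 1 = Ioo a b := by
  have := Set.image_affine_Ioo (by linarith : (0:ℝ) < b - a) a (0:ℝ) 1
  simpa using this

lemma affine_inj (a b : ℝ) (hab : a < b) : InjOn (fun w : ℝ => (b-a) * w + a) (Ioo 0 1) := by
  intro u _ v _ h
  simp only at h
  exact mul_left_cancel₀ (sub_ne_zero.mpr hab.ne') (by linarith)

lemma beta_intg' {p q : ℝ} (hp : -1 < p) (hq : -1 < q) {a b : ℝ} (hab : a < b)
    {c : ℝ → ℝ} (hc : ContinuousOn c (Icc a b)) :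
    IntegrableOn (fun t : ℝ => (t-a) ^ p * (b-t) ^ q * c t) (Ioo a b) := by
  rw [← affine_image hab,
    MeasureTheory.integrableOn_image_iff_integrableOn_abs_deriv_smul measurableSet_Ioo
      (fun w _ => (affine_deriv a b w).hasDerivWithinAt) (affine_inj a b hab)]
  have hcφ : ContinuousOn (fun w : ℝ => c ((b-a) * w + a)) (Icc 0 1) := by
    apply hc.comp (Continuous.continuousOn (by continuity))
    intro w hw
    have h0 : (0:ℝ) ≤ (b-a) * w := mul_nonneg (by linarith) hw.1
    have h1 : (b-a) * w ≤ (b-a) * 1 := mul_le_mul_of_nonneg_left hw.2 (by linarith)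
    simp only [Set.mem_Icc]
    exact ⟨by linarith, by nlinarith⟩
  obtain ⟨C, hC⟩ := (isCompact_Icc (a := (0:ℝ)) (b := 1)).exists_bound_of_continuousOn hcφ
  have hmeas : AEStronglyMeasurable (fun w : ℝ => c ((b-a) * w + a)) (volume.restrict (Ioo 0 1)) :=
    (hcφ.mono Ioo_subset_Icc_self).aestronglyMeasurable measurableSet_Ioo
  have hint : IntegrableOn (fun w : ℝ => ((b-a)^(p+q+1) * (w ^ p * (1-w) ^ q)) * c ((b-a)*w + a))
      (Ioo 0 1) := by
    have hbase : Integrable (fun w : ℝ => (b-a)^(p+q+1) * (w ^ p * (1-w) ^ q))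
        (volume.restrict (Ioo 0 1)) := (beta_intg0 hp hq).const_mul _
    have := hbase.bdd_mul (c := |C| ) hmeas ?_
    · exact this.congr (by filter_upwards with w; ring)
    · filter_upwards [ae_restrict_mem measurableSet_Ioo] with w _
      exact (hC _ (Ioo_subset_Icc_self ‹_›)).trans (le_abs_self C)
  apply hint.congr_fun ?_ measurableSet_Ioo
  intro w hw
  have hba : (0:ℝ) < b - a := by linarith
  have h1 : (b-a) * w + a - a = (b-a) * w := by ring
  have h2 : b - ((b-a) * w + a) = (b-a) * (1-w) := by ring
  simp only [smul_eq_mul, h1, h2]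
  rw [Real.mul_rpow hba.le hw.1.le, Real.mul_rpow hba.le (by linarith [hw.2])]
  rw [abs_of_pos hba, Real.rpow_add hba, Real.rpow_add hba, Real.rpow_one]
  ring

lemma beta_eval' {p q : ℝ} (hp : 0 < p) (hq : 0 < q) {a b : ℝ} (hab : a < b) :
    ∫ t in Ioo a b, (t-a) ^ (p-1) * (b-t) ^ (q-1) = (b-a) ^ (p+q-1) * betaR p q := by
  rw [← affine_image hab,
    MeasureTheory.integral_image_eq_integral_abs_deriv_smul measurableSet_Ioo
      (fun w _ => (affine_deriv a b w).hasDerivWithinAt) (affine_inj a b hab)]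
  have hba : (0:ℝ) < b - a := by linarith
  rw [show (∫ w in Ioo (0:ℝ) 1, |b-a| • (((b-a)*w+a-a) ^ (p-1) * (b-((b-a)*w+a)) ^ (q-1)))
      = ∫ w in Ioo (0:ℝ) 1, (b-a)^(p+q-1) * (w ^ (p-1) * (1-w) ^ (q-1)) from ?_,
    MeasureTheory.integral_const_mul, beta_eval hp hq]
  apply setIntegral_congr_fun measurableSet_Ioo
  intro w hw
  have h1 : (b-a) * w + a - a = (b-a) * w := by ring
  have h2 : b - ((b-a) * w + a) = (b-a) * (1-w) := by ring
  simp only [smul_eq_mul, h1, h2]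
  rw [Real.mul_rpow hba.le hw.1.le, Real.mul_rpow hba.le (by linarith [hw.2]),
    abs_of_pos hba]
  rw [show p+q-1 = (p-1) + (q-1) + 1 by ring, Real.rpow_add hba, Real.rpow_add hba, Real.rpow_one]
  ring



lemma mobius_alg (α s b w v D : ℝ) (hs : 0 < s) (hb : 0 < b) (hw : 0 < w) (hv : 0 < v) (hD : 0 < D) :
    s*b/D^2 * ((s*b*v/D)^(α-2) * ((s*w/D)^(-(α/2)) * (b/D)^(-(α/2))))
      = s^(α/2-1)*b^(α/2-1) * (w^(-(α/2)) * v^(α-2)) := by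
  have h1 : (0:ℝ) < s*b/D^2 * ((s*b*v/D)^(α-2) * ((s*w/D)^(-(α/2)) * (b/D)^(-(α/2)))) := by positivity
  have h2 : (0:ℝ) < s^(α/2-1)*b^(α/2-1) * (w^(-(α/2)) * v^(α-2)) := by positivity
  have hlog : Real.log (s*b/D^2 * ((s*b*v/D)^(α-2) * ((s*w/D)^(-(α/2)) * (b/D)^(-(α/2)))))
      = Real.log (s^(α/2-1)*b^(α/2-1) * (w^(-(α/2)) * v^(α-2))) := by
    simp (disch := positivity) only [Real.log_mul, Real.log_div, Real.log_rpow, Real.log_pow]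
    push_cast
    ring
  have := congrArg Real.exp hlog
  rwa [Real.exp_log h1, Real.exp_log h2] at this

lemma keyA {α s : ℝ} (hα1 : 1 < α) (hα2 : α < 2) (hs0 : 0 < s) (hs1 : s < 1) :
    ∫ u in Ioo 0 s, (s-u) ^ (α-2) * (u ^ (-(α/2)) * (1-u) ^ (-(α/2)))
      = betaR (1-α/2) (α-1) * (s ^ (α/2-1) * (1-s) ^ (α/2-1)) := by
  have h1s : (0:ℝ) < 1 - s := by linarith
  set φ : ℝ → ℝ := fun w => s*w / (1-s+s*w) with hφ
  have hD : ∀ w : ℝ, 0 < w → 0 < 1-s+s*w := fun w hw => by nlinarith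
  have hderiv : ∀ w ∈ Ioo (0:ℝ) 1, HasDerivWithinAt φ (s*(1-s)/(1-s+s*w)^2) (Ioo 0 1) w := by
    intro w hw
    have hDw := hD w hw.1
    have h : HasDerivAt φ ((s * (1-s+s*w) - s*w*s)/(1-s+s*w)^2) w := by
      apply HasDerivAt.div
      · simpa using (hasDerivAt_id w).const_mul s
      · simpa using ((hasDerivAt_id w).const_mul s).const_add (1-s)
      · exact hDw.ne'
    have he : (s * (1-s+s*w) - s*w*s)/(1-s+s*w)^2 = s*(1-s)/(1-s+s*w)^2 := by ring_nf
    rw [he] at h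
    exact h.hasDerivWithinAt
  have hinj : InjOn φ (Ioo 0 1) := by
    intro u hu v hv h
    have hDu := hD u hu.1
    have hDv := hD v hv.1
    rw [hφ] at h
    simp only at h
    rw [div_eq_div_iff hDu.ne' hDv.ne'] at h
    have h2 : s*(1-s)*(u-v) = 0 := by linear_combination h
    have hne : s*(1-s) ≠ 0 := by positivity
    have h3 := (mul_eq_zero.mp h2).resolve_left hne
    linarith
  have himg : φ '' Ioo 0 1 = Ioo 0 s := by
    ext u
    constructor
    · rintro ⟨w, hw, rfl⟩
      have hDw := hD w hw.1
      constructor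
      · have hw0 := hw.1
        exact div_pos (by positivity) hDw
      · rw [hφ]
        simp only
        rw [div_lt_iff₀ hDw]
        nlinarith [mul_pos (mul_pos hs0 h1s) (by linarith [hw.2] : (0:ℝ) < 1 - w)]
    · intro hu
      have h1u : (0:ℝ) < 1 - u := by nlinarith [hu.2]
      refine ⟨(1-s)*u/(s*(1-u)), ⟨div_pos (mul_pos h1s hu.1) (mul_pos hs0 h1u), ?_⟩, ?_⟩
      · rw [div_lt_one (mul_pos hs0 h1u)]
        nlinarith [hu.1, hu.2]
      · rw [hφ]
        simp only
        rw [div_eq_iff]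
        · field_simp
          ring
        · have hne : s*(1-u) ≠ 0 := by positivity
          field_simp
          rw [sub_add_cancel, mul_one]; exact (div_pos h1s h1u).ne'
  have hcong : (∫ w in Ioo (0:ℝ) 1, |s*(1-s)/(1-s+s*w)^2| •
        ((s - φ w) ^ (α-2) * ((φ w) ^ (-(α/2)) * (1 - φ w) ^ (-(α/2)))))
      = ∫ w in Ioo (0:ℝ) 1, (s^(α/2-1) * (1-s)^(α/2-1)) * (w ^ ((1-α/2)-1) * (1-w) ^ ((α-1)-1)) := by
    apply setIntegral_congr_fun measurableSet_Ioo
    intro w hw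
    dsimp only
    have hw0 := hw.1
    have h1w : (0:ℝ) < 1 - w := by linarith [hw.2]
    have hDw := hD w hw0
    have e1 : s - φ w = s*(1-s)*(1-w)/(1-s+s*w) := by
      rw [hφ]; simp only
      rw [eq_div_iff hDw.ne']
      field_simp
      try ring
    have e2 : 1 - φ w = (1-s)/(1-s+s*w) := by
      rw [hφ]; simp only
      rw [eq_div_iff hDw.ne']
      field_simp
      try ring
    have e3 : φ w = s*w/(1-s+s*w) := rfl
    rw [smul_eq_mul, e1, e2, e3, abs_of_pos (by positivity)]
    have := mobius_alg α s (1-s) w (1-w) (1-s+s*w) hs0 h1s hw0 h1w hDw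
    rw [show (1-α/2)-1 = -(α/2) by ring, show (α-1)-1 = α-2 by ring]
    linarith [this]
  rw [← himg, MeasureTheory.integral_image_eq_integral_abs_deriv_smul measurableSet_Ioo hderiv hinj,
    hcong, MeasureTheory.integral_const_mul, beta_eval (by linarith) (by linarith)]
  ring


section
variable {α x : ℝ}

lemma measurable_rpow_const (r : ℝ) : Measurable (fun t : ℝ => t ^ r) := by
  apply measurable_of_continuousOn_compl_singleton (0:ℝ)
  intro t ht
  exact (Real.continuousAt_rpow_const t r (Or.inl ht)).continuousWithinAt

-- measurability of the 2D integrand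
lemma Wmeas (α x : ℝ) : Measurable (fun p : ℝ × ℝ =>
    if 0 < p.1 ∧ p.1 < p.2 ∧ p.2 < x then
      ENNReal.ofReal ((x-p.2) ^ (1-α) * ((p.2-p.1) ^ (α-2) * (p.1 ^ (-(α/2)) * (1-p.1) ^ (-(α/2)))))
    else 0) := by
  apply Measurable.ite
  · apply MeasurableSet.inter
    · exact measurableSet_lt measurable_const measurable_fst
    · exact MeasurableSet.inter (measurableSet_lt measurable_fst measurable_snd)
        (measurableSet_lt measurable_snd measurable_const)
  · apply ENNReal.measurable_ofReal.comp
    apply Measurable.mul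
    · exact (measurable_rpow_const (1-α)).comp (measurable_const.sub measurable_snd)
    · apply Measurable.mul
      · exact (measurable_rpow_const (α-2)).comp (measurable_snd.sub measurable_fst)
      · exact ((measurable_rpow_const (-(α/2))).comp measurable_fst).mul
          ((measurable_rpow_const (-(α/2))).comp (measurable_const.sub measurable_fst))
  · exact measurable_const

lemma one_sub_rpow_contOn {r b : ℝ} (hb : b < 1) :
    ContinuousOn (fun u : ℝ => (1-u) ^ r) (Icc 0 b) := by
  intro u hu
  apply ContinuousAt.continuousWithinAt
  have h1 : ContinuousAt (fun u : ℝ => 1 - u) u := by fun_prop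
  exact (Real.continuousAt_rpow_const (1-u) r (Or.inl (by nlinarith [hu.2] : (1:ℝ) - u ≠ 0))).comp h1

end


lemma keyFubini {α x : ℝ} (hα1 : 1 < α) (hα2 : α < 2) (hx0 : 0 < x) (hx1 : x < 1) :
    ∫ s in Ioo 0 x, (x-s) ^ (1-α) * (betaR (1-α/2) (α-1) * (s ^ (α/2-1) * (1-s) ^ (α/2-1)))
      = ∫ u in Ioo 0 x, (u ^ (-(α/2)) * (1-u) ^ (-(α/2))) * betaR (α-1) (2-α) := by
  have hB1 : 0 < betaR (1-α/2) (α-1) := by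
    rw [betaR]
    exact div_pos (mul_pos (Real.Gamma_pos_of_pos (by linarith)) (Real.Gamma_pos_of_pos (by linarith)))
      (Real.Gamma_pos_of_pos (by linarith))
  have hB2 : 0 < betaR (α-1) (2-α) := by
    rw [betaR]
    exact div_pos (mul_pos (Real.Gamma_pos_of_pos (by linarith)) (Real.Gamma_pos_of_pos (by linarith)))
      (Real.Gamma_pos_of_pos (by linarith))
  set f : ℝ × ℝ → ℝ≥0∞ := fun p =>
    if 0 < p.1 ∧ p.1 < p.2 ∧ p.2 < x then
      ENNReal.ofReal ((x-p.2) ^ (1-α) * ((p.2-p.1) ^ (α-2) * (p.1 ^ (-(α/2)) * (1-p.1) ^ (-(α/2)))))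
    else 0 with hf
  -- step 1 : inner u-integral for fixed s
  have step1 : ∀ s : ℝ, (∫⁻ u, f (u, s)) = (Ioo 0 x).indicator
      (fun s => ENNReal.ofReal ((x-s) ^ (1-α) * (betaR (1-α/2) (α-1) * (s ^ (α/2-1) * (1-s) ^ (α/2-1))))) s := by
    intro s
    by_cases hs : s ∈ Ioo 0 x
    · rw [indicator_of_mem hs]
      have h1 : ∀ u, f (u, s) = (Ioo 0 s).indicator
          (fun u => ENNReal.ofReal ((x-s) ^ (1-α) * ((s-u) ^ (α-2) * (u ^ (-(α/2)) * (1-u) ^ (-(α/2)))))) u := by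
        intro u
        by_cases hu : u ∈ Ioo 0 s
        · rw [indicator_of_mem hu]
          exact if_pos ⟨hu.1, hu.2, hs.2⟩
        · rw [indicator_of_notMem hu]
          refine if_neg ?_
          rintro ⟨h1, h2, h3⟩
          exact hu ⟨h1, h2⟩
      rw [lintegral_congr h1, lintegral_indicator measurableSet_Ioo]
      have hs1 : s < 1 := lt_trans hs.2 hx1
      have hInt : IntegrableOn
          (fun u => (x-s) ^ (1-α) * ((s-u) ^ (α-2) * (u ^ (-(α/2)) * (1-u) ^ (-(α/2))))) (Ioo 0 s) := by
        have := beta_intg' (p := -(α/2)) (q := α-2) (by linarith) (by linarith) hs.1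
          (c := fun u => (1-u) ^ (-(α/2)) * (x-s) ^ (1-α))
          ((one_sub_rpow_contOn hs1).mul continuousOn_const)
        apply this.congr_fun ?_ measurableSet_Ioo
        intro u hu
        simp only [sub_zero]
        ring
      have hnn : 0 ≤ᵐ[volume.restrict (Ioo 0 s)]
          (fun u => (x-s) ^ (1-α) * ((s-u) ^ (α-2) * (u ^ (-(α/2)) * (1-u) ^ (-(α/2))))) := by
        filter_upwards [ae_restrict_mem measurableSet_Ioo] with u hu
        have h1 : (0:ℝ) ≤ x - s := by linarith [hs.2]
        have h2 : (0:ℝ) ≤ s - u := by linarith [hu.2]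
        have h3 : (0:ℝ) ≤ u := hu.1.le
        have h4 : (0:ℝ) ≤ 1 - u := by linarith [hu.2]
        positivity
      rw [← ofReal_integral_eq_lintegral_ofReal hInt hnn]
      congr 1
      rw [MeasureTheory.integral_const_mul, keyA hα1 hα2 hs.1 hs1]
    · rw [indicator_of_notMem hs]
      have h1 : ∀ u, f (u, s) = 0 := by
        intro u
        refine if_neg ?_
        rintro ⟨h1, h2, h3⟩
        exact hs ⟨lt_trans h1 h2, h3⟩
      simp [lintegral_congr h1]
  -- step 2 : inner s-integral for fixed u
  have step2 : ∀ u : ℝ, (∫⁻ s, f (u, s)) = (Ioo 0 x).indicator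
      (fun u => ENNReal.ofReal ((u ^ (-(α/2)) * (1-u) ^ (-(α/2))) * betaR (α-1) (2-α))) u := by
    intro u
    by_cases hu : u ∈ Ioo 0 x
    · rw [indicator_of_mem hu]
      have h1 : ∀ s, f (u, s) = (Ioo u x).indicator
          (fun s => ENNReal.ofReal ((x-s) ^ (1-α) * ((s-u) ^ (α-2) * (u ^ (-(α/2)) * (1-u) ^ (-(α/2)))))) s := by
        intro s
        by_cases hsu : s ∈ Ioo u x
        · rw [indicator_of_mem hsu]
          exact if_pos ⟨hu.1, hsu.1, hsu.2⟩
        · rw [indicator_of_notMem hsu]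
          refine if_neg ?_
          rintro ⟨h1, h2, h3⟩
          exact hsu ⟨h2, h3⟩
      rw [lintegral_congr h1, lintegral_indicator measurableSet_Ioo]
      have h1u : (0:ℝ) < 1 - u := by linarith [lt_trans hu.2 hx1]
      have hInt : IntegrableOn
          (fun s => (x-s) ^ (1-α) * ((s-u) ^ (α-2) * (u ^ (-(α/2)) * (1-u) ^ (-(α/2))))) (Ioo u x) := by
        have := beta_intg' (p := α-2) (q := 1-α) (by linarith) (by linarith) hu.2
          (c := fun _ => u ^ (-(α/2)) * (1-u) ^ (-(α/2))) continuousOn_const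
        apply this.congr_fun ?_ measurableSet_Ioo
        intro s hsu
        ring
      have hnn : 0 ≤ᵐ[volume.restrict (Ioo u x)]
          (fun s => (x-s) ^ (1-α) * ((s-u) ^ (α-2) * (u ^ (-(α/2)) * (1-u) ^ (-(α/2))))) := by
        filter_upwards [ae_restrict_mem measurableSet_Ioo] with s hsu
        have h1 : (0:ℝ) ≤ x - s := by linarith [hsu.2]
        have h2 : (0:ℝ) ≤ s - u := by linarith [hsu.1]
        have h3 : (0:ℝ) ≤ u := hu.1.le
        have h4 : (0:ℝ) ≤ 1 - u := h1u.le
        positivity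
      rw [← ofReal_integral_eq_lintegral_ofReal hInt hnn]
      congr 1
      have hEq : EqOn
          (fun s => (x-s) ^ (1-α) * ((s-u) ^ (α-2) * (u ^ (-(α/2)) * (1-u) ^ (-(α/2)))))
          (fun s => (u ^ (-(α/2)) * (1-u) ^ (-(α/2))) * ((s-u) ^ ((α-1)-1) * (x-s) ^ ((2-α)-1)))
          (Ioo u x) := by
        intro s hsu
        simp only
        rw [show (α-1)-1 = α-2 by ring, show (2-α)-1 = 1-α by ring]
        ring
      rw [setIntegral_congr_fun measurableSet_Ioo hEq, MeasureTheory.integral_const_mul,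
        beta_eval' (by linarith) (by linarith) hu.2,
        show (α-1)+(2-α)-1 = (0:ℝ) by ring, Real.rpow_zero, one_mul]
    · rw [indicator_of_notMem hu]
      have h1 : ∀ s, f (u, s) = 0 := by
        intro s
        refine if_neg ?_
        rintro ⟨h1, h2, h3⟩
        exact hu ⟨h1, lt_trans h2 h3⟩
      simp [lintegral_congr h1]
  -- swap
  have hswap : (∫⁻ s, ∫⁻ u, f (u, s)) = ∫⁻ u, ∫⁻ s, f (u, s) :=
    lintegral_lintegral_swap (((Wmeas α x).comp measurable_swap).aemeasurable)
  rw [lintegral_congr step1, lintegral_congr step2, lintegral_indicator measurableSet_Ioo,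
    lintegral_indicator measurableSet_Ioo] at hswap
  -- convert both sides to Bochner integrals
  have hIg1 : IntegrableOn
      (fun s => (x-s) ^ (1-α) * (betaR (1-α/2) (α-1) * (s ^ (α/2-1) * (1-s) ^ (α/2-1)))) (Ioo 0 x) := by
    have := beta_intg' (p := α/2-1) (q := 1-α) (by linarith) (by linarith) hx0
      (c := fun s => (1-s) ^ (α/2-1) * betaR (1-α/2) (α-1))
      ((one_sub_rpow_contOn hx1).mul continuousOn_const)
    apply this.congr_fun ?_ measurableSet_Ioo
    intro s hs
    simp only [sub_zero]
    ring
  have hIg2 : IntegrableOn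
      (fun u => (u ^ (-(α/2)) * (1-u) ^ (-(α/2))) * betaR (α-1) (2-α)) (Ioo 0 x) := by
    have := beta_intg' (p := -(α/2)) (q := (0:ℝ)) (by linarith) (by norm_num) hx0
      (c := fun u => (1-u) ^ (-(α/2)) * betaR (α-1) (2-α))
      ((one_sub_rpow_contOn hx1).mul continuousOn_const)
    apply this.congr_fun ?_ measurableSet_Ioo
    intro u hu
    simp only [sub_zero, Real.rpow_zero]
    ring
  have hnn1 : 0 ≤ᵐ[volume.restrict (Ioo 0 x)]
      (fun s => (x-s) ^ (1-α) * (betaR (1-α/2) (α-1) * (s ^ (α/2-1) * (1-s) ^ (α/2-1)))) := by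
    filter_upwards [ae_restrict_mem measurableSet_Ioo] with s hs
    have h1 : (0:ℝ) ≤ x - s := by linarith [hs.2]
    have h3 : (0:ℝ) ≤ s := hs.1.le
    have h4 : (0:ℝ) ≤ 1 - s := by linarith [lt_trans hs.2 hx1]
    positivity
  have hnn2 : 0 ≤ᵐ[volume.restrict (Ioo 0 x)]
      (fun u => (u ^ (-(α/2)) * (1-u) ^ (-(α/2))) * betaR (α-1) (2-α)) := by
    filter_upwards [ae_restrict_mem measurableSet_Ioo] with u hu
    have h3 : (0:ℝ) ≤ u := hu.1.le
    have h4 : (0:ℝ) ≤ 1 - u := by linarith [lt_trans hu.2 hx1]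
    positivity
  rw [← ofReal_integral_eq_lintegral_ofReal hIg1 hnn1,
    ← ofReal_integral_eq_lintegral_ofReal hIg2 hnn2] at hswap
  rw [ENNReal.ofReal_eq_ofReal_iff] at hswap
  · exact hswap
  · exact setIntegral_nonneg measurableSet_Ioo (fun s hs => by
      have h1 : (0:ℝ) ≤ x - s := by linarith [hs.2]
      have h3 : (0:ℝ) ≤ s := hs.1.le
      have h4 : (0:ℝ) ≤ 1 - s := by linarith [lt_trans hs.2 hx1]
      positivity)
  · exact setIntegral_nonneg measurableSet_Ioo (fun u hu => by
      have h3 : (0:ℝ) ≤ u := hu.1.le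
      have h4 : (0:ℝ) ≤ 1 - u := by linarith [lt_trans hu.2 hx1]
      positivity)

theorem stmt0 (α x : ℝ) (hα : 1 < α ∧ α < 2) (hx : x ∈ Set.Ioo (0:ℝ) 1) :
    (1 / Real.Gamma (2 - α)) *
      ∫ s in (0:ℝ)..x, (x - s) ^ (1 - α) * s ^ (α/2 - 1) * (1 - s) ^ (α/2 - 1)
    = (Real.Gamma (α/2) / Real.Gamma (1 - α/2)) *
      ∫ s in (0:ℝ)..x, s ^ (-(α/2)) * (1 - s) ^ (-(α/2)) := by
  obtain ⟨hα1, hα2⟩ := hα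
  obtain ⟨hx0, hx1⟩ := hx
  have hkey := keyFubini hα1 hα2 hx0 hx1
  rw [intervalIntegral.integral_of_le hx0.le, intervalIntegral.integral_of_le hx0.le,
    MeasureTheory.integral_Ioc_eq_integral_Ioo, MeasureTheory.integral_Ioc_eq_integral_Ioo]
  -- rewrite hkey pulling out the constants
  have e1 : (∫ s in Ioo 0 x, (x-s) ^ (1-α) * (betaR (1-α/2) (α-1) * (s ^ (α/2-1) * (1-s) ^ (α/2-1))))
      = betaR (1-α/2) (α-1) * ∫ s in Ioo 0 x, (x-s) ^ (1-α) * s ^ (α/2-1) * (1-s) ^ (α/2-1) := by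
    rw [← MeasureTheory.integral_const_mul]
    apply setIntegral_congr_fun measurableSet_Ioo
    intro s hs
    ring
  have e2 : (∫ u in Ioo 0 x, (u ^ (-(α/2)) * (1-u) ^ (-(α/2))) * betaR (α-1) (2-α))
      = betaR (α-1) (2-α) * ∫ u in Ioo 0 x, u ^ (-(α/2)) * (1-u) ^ (-(α/2)) := by
    rw [← MeasureTheory.integral_const_mul]
    apply setIntegral_congr_fun measurableSet_Ioo
    intro u hu
    ring
  rw [e1, e2] at hkey
  have G1 : 0 < Real.Gamma (1-α/2) := Real.Gamma_pos_of_pos (by linarith)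
  have G2 : 0 < Real.Gamma (α-1) := Real.Gamma_pos_of_pos (by linarith)
  have G3 : 0 < Real.Gamma (α/2) := Real.Gamma_pos_of_pos (by linarith)
  have G4 : 0 < Real.Gamma (2-α) := Real.Gamma_pos_of_pos (by linarith)
  have b1 : betaR (1-α/2) (α-1) = Real.Gamma (1-α/2) * Real.Gamma (α-1) / Real.Gamma (α/2) := by
    rw [betaR, show (1-α/2)+(α-1) = α/2 by ring]
  have b2 : betaR (α-1) (2-α) = Real.Gamma (α-1) * Real.Gamma (2-α) := by
    rw [betaR, show (α-1)+(2-α) = (1:ℝ) by ring, Real.Gamma_one, div_one]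
  rw [b1, b2] at hkey
  set g1 := Real.Gamma (1-α/2) with hg1
  set g2 := Real.Gamma (α-1) with hg2
  set g3 := Real.Gamma (α/2) with hg3
  set g4 := Real.Gamma (2-α) with hg4
  set I1 := ∫ s in Ioo 0 x, (x - s) ^ (1-α) * s ^ (α/2-1) * (1-s) ^ (α/2-1) with hI1
  set I2 := ∫ u in Ioo 0 x, u ^ (-(α/2)) * (1-u) ^ (-(α/2)) with hI2
  rw [div_mul_eq_mul_div, div_eq_iff G3.ne'] at hkey
  have hkey2 : g1 * I1 = g4 * I2 * g3 := by
    apply mul_left_cancel₀ G2.ne'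
    linear_combination hkey
  field_simp
  linear_combination hkey2
end

section
/- For 1 < α < 2 and x ∈ (0,1), the right Riemann–Liouville fractional integral of order 2−α of k(s) = s^{α/2−1}(1−s)^{α/2−1} satisfies: (1/Γ(2−α)) ∫ₓ¹ (s−x)^{1−α} s^{α/2−1} (1−s)^{α/2−1} ds = (Γ(α/2)/Γ(1−α/2)) ∫ₓ¹ s^{−α/2} (1−s)^{−α/2} ds. -/
open intervalIntegral MeasureTheory

open intervalIntegral MeasureTheory

lemma real_beta {p q : ℝ} (hp : 0 < p) (hq : 0 < q) :
    ∫ v in (0:ℝ)..1, v ^ (p-1) * (1-v) ^ (q-1)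
      = Real.Gamma p * Real.Gamma q / Real.Gamma (p+q) := by
  have h := Complex.Gamma_mul_Gamma_eq_betaIntegral (s := (p:ℂ)) (t := (q:ℂ))
    (by simpa using hp) (by simpa using hq)
  have hbeta : Complex.betaIntegral (p:ℂ) (q:ℂ)
      = ((∫ v in (0:ℝ)..1, v ^ (p-1) * (1-v) ^ (q-1) : ℝ) : ℂ) := by
    rw [Complex.betaIntegral, ← intervalIntegral.integral_ofReal]
    apply intervalIntegral.integral_congr
    intro v hv
    rw [Set.uIcc_of_le (by norm_num : (0:ℝ) ≤ 1)] at hv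
    have h0 : (0:ℝ) ≤ v := hv.1
    have h1 : (0:ℝ) ≤ 1 - v := by linarith [hv.2]
    beta_reduce
    rw [show ((p:ℂ) - 1) = ((p-1 : ℝ) : ℂ) by push_cast; ring,
      show ((q:ℂ) - 1) = ((q-1 : ℝ) : ℂ) by push_cast; ring,
      show ((1:ℂ) - (v:ℂ)) = ((1 - v : ℝ) : ℂ) by push_cast; ring,
      ← Complex.ofReal_cpow h0, ← Complex.ofReal_cpow h1, ← Complex.ofReal_mul]
  rw [hbeta, ← Complex.ofReal_add, Complex.Gamma_ofReal, Complex.Gamma_ofReal,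
    Complex.Gamma_ofReal, ← Complex.ofReal_mul, ← Complex.ofReal_mul] at h
  have := Complex.ofReal_inj.mp h
  have hG : Real.Gamma (p+q) ≠ 0 := (Real.Gamma_pos_of_pos (by linarith)).ne'
  field_simp
  linarith [this]

lemma lin_sub' {a b p q : ℝ} (hab : a < b) :
    ∫ s in a..b, (s-a) ^ p * (b-s) ^ q
      = (b-a) ^ (p+q+1) * ∫ v in (0:ℝ)..1, v ^ p * (1-v) ^ q := by
  have hba : (0:ℝ) < b - a := by linarith
  have h := intervalIntegral.integral_comp_add_mul
    (f := fun s => (s-a) ^ p * (b-s) ^ q) (a := (0:ℝ)) (b := 1)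
    (c := b - a) (hc := hba.ne') (d := a)
  simp only [mul_zero, add_zero, mul_one] at h
  rw [show a + (b-a) = b by ring] at h
  have h2 : (∫ v in (0:ℝ)..1, (a + (b-a)*v - a) ^ p * (b - (a + (b-a)*v)) ^ q)
      = ∫ v in (0:ℝ)..1, (b-a) ^ p * (b-a) ^ q * (v ^ p * (1-v) ^ q) := by
    apply intervalIntegral.integral_congr
    intro v hv
    rw [Set.uIcc_of_le (by norm_num : (0:ℝ) ≤ 1)] at hv
    beta_reduce
    rw [show a + (b-a)*v - a = (b-a)*v by ring, show b - (a + (b-a)*v) = (b-a)*(1-v) by ring,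
      Real.mul_rpow hba.le hv.1, Real.mul_rpow hba.le (by linarith [hv.2])]
    ring
  rw [h2, intervalIntegral.integral_const_mul] at h
  rw [smul_eq_mul] at h
  have h3 := congrArg (fun z => (b-a) * z) h
  beta_reduce at h3
  rw [← mul_assoc (b-a) (b-a)⁻¹, mul_inv_cancel₀ hba.ne', one_mul] at h3
  rw [← h3, show p+q+1 = 1 + p + q by ring, Real.rpow_add hba, Real.rpow_add hba,
    Real.rpow_one]
  ring

lemma II_gen {a b p q : ℝ} (hab : a < b) (hp : -1 < p) (hq : -1 < q) {c : ℝ → ℝ}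
    (hc : ContinuousOn c (Set.Icc a b)) :
    IntervalIntegrable (fun s => (s-a) ^ p * (b-s) ^ q * c s) volume a b := by
  set m := (a+b)/2 with hm
  have ham : a < m := by simp only [hm]; linarith
  have hmb : m < b := by simp only [hm]; linarith
  have key : (fun s => (s-a) ^ p * (b-s) ^ q * c s)
      = fun s => (s-a) ^ p * ((b-s) ^ q * c s) := by funext s; ring
  have key2 : (fun s => (s-a) ^ p * (b-s) ^ q * c s)
      = fun s => (b-s) ^ q * ((s-a) ^ p * c s) := by funext s; ring
  apply IntervalIntegrable.trans (b := m)
  · rw [key]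
    apply IntervalIntegrable.mul_continuousOn
    · have h1 : IntervalIntegrable (fun t : ℝ => t ^ p) volume 0 (m-a) :=
        intervalIntegrable_rpow' hp
      have := h1.comp_sub_right a
      simpa using this
    · rw [Set.uIcc_of_le ham.le]
      apply ContinuousOn.mul
      · apply ContinuousOn.rpow_const (by fun_prop)
        intro s hs
        exact Or.inl (by simp only [ne_eq]; intro h; nlinarith [hs.2])
      · exact hc.mono (Set.Icc_subset_Icc le_rfl hmb.le)
  · rw [key2]
    apply IntervalIntegrable.mul_continuousOn
    · have h1 : IntervalIntegrable (fun t : ℝ => t ^ q) volume 0 (b-m) :=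
        intervalIntegrable_rpow' hq
      have := (h1.comp_sub_left b).symm
      simpa using this
    · rw [Set.uIcc_of_le hmb.le]
      apply ContinuousOn.mul
      · apply ContinuousOn.rpow_const (by fun_prop)
        intro s hs
        exact Or.inl (by simp only [ne_eq]; intro h; nlinarith [hs.1])
      · exact hc.mono (Set.Icc_subset_Icc ham.le le_rfl)
lemma lemA {α y : ℝ} (h1 : 1 < α) (h2 : α < 2) (hy0 : 0 < y) (hy1 : y < 1) :
    ∫ r in y..(1:ℝ), (r-y) ^ (α-2) * (r ^ (-(α/2)) * (1-r) ^ (-(α/2)))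
      = (y ^ (α/2-1) * (1-y) ^ (α/2-1)) *
        ∫ v in (0:ℝ)..1, v ^ (-(α/2)) * (1-v) ^ (α-2) := by
  have himg : (fun t => y/t) '' (Set.Ioo y 1) = Set.Ioo y 1 := by
    ext r
    constructor
    · rintro ⟨t, ⟨hty, ht1⟩, rfl⟩
      have ht0 : 0 < t := lt_trans hy0 hty
      constructor
      · rw [lt_div_iff₀ ht0]
        nlinarith
      · rw [div_lt_one ht0]
        exact hty
    · rintro ⟨hry, hr1⟩
      have hr0 : 0 < r := lt_trans hy0 hry
      refine ⟨y/r, ⟨?_, ?_⟩, ?_⟩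
      · rw [lt_div_iff₀ hr0]; nlinarith
      · rw [div_lt_one hr0]; exact hry
      · field_simp
  have hderiv : ∀ t ∈ Set.Ioo y (1:ℝ), HasDerivWithinAt (fun t => y/t) (-(y/t^2)) (Set.Ioo y 1) t := by
    intro t ht
    have ht0 : t ≠ 0 := (lt_trans hy0 ht.1).ne'
    have h' := ((hasDerivAt_inv ht0).const_mul y).hasDerivWithinAt (s := Set.Ioo y 1)
    have e1 : (fun u : ℝ => y * u⁻¹) = fun t => y/t := by funext u; rw [div_eq_mul_inv]
    have e2 : y * -(t^2)⁻¹ = -(y/t^2) := by field_simp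
    rw [e1, e2] at h'
    exact h'
  have hinj : Set.InjOn (fun t => y/t) (Set.Ioo y 1) := by
    intro t1 h1 t2 h2 h
    have h10 : t1 ≠ 0 := (lt_trans hy0 h1.1).ne'
    have h20 : t2 ≠ 0 := (lt_trans hy0 h2.1).ne'
    field_simp at h
    linarith
  have hcov := integral_image_eq_integral_abs_deriv_smul measurableSet_Ioo hderiv hinj
    (fun r => (r-y) ^ (α-2) * (r ^ (-(α/2)) * (1-r) ^ (-(α/2))))
  rw [himg] at hcov
  rw [integral_of_le hy1.le, integral_Ioc_eq_integral_Ioo, hcov]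
  have hptw : Set.EqOn
      (fun t => |(-(y/t^2))| • ((y/t-y) ^ (α-2) * ((y/t) ^ (-(α/2)) * (1-y/t) ^ (-(α/2)))))
      (fun t => y ^ (α/2-1) * ((t-y) ^ (-(α/2)) * (1-t) ^ (α-2))) (Set.Ioo y 1) := by
    intro t ht
    obtain ⟨hty, ht1⟩ := ht
    have ht0 : 0 < t := lt_trans hy0 hty
    have hA : y/t - y = y*(1-t)/t := by field_simp
    have hB : 1 - y/t = (t-y)/t := by field_simp
    have h1t : (0:ℝ) < 1 - t := by linarith
    have hty' : (0:ℝ) < t - y := by linarith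
    have hApos : 0 < y*(1-t)/t := div_pos (mul_pos hy0 h1t) ht0
    have hBpos : 0 < (t-y)/t := div_pos (by linarith) ht0
    have hyt : 0 < y/t := by positivity
    have habs : |(-(y/t^2))| = y/t^2 := by
      rw [abs_neg, abs_of_pos (by positivity)]
    simp only [smul_eq_mul, habs, hA, hB]
    rw [Real.rpow_def_of_pos hApos, Real.rpow_def_of_pos hBpos, Real.rpow_def_of_pos hyt,
      Real.rpow_def_of_pos hy0, Real.rpow_def_of_pos (by linarith : (0:ℝ) < t - y),
      Real.rpow_def_of_pos (by linarith : (0:ℝ) < 1 - t),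
      show y/t^2 = Real.exp (Real.log (y/t^2)) by rw [Real.exp_log (by positivity)]]
    rw [Real.log_div (mul_pos hy0 h1t).ne' ht0.ne', Real.log_mul hy0.ne' h1t.ne',
      Real.log_div hty'.ne' ht0.ne', Real.log_div hy0.ne' (by positivity : (0:ℝ) < t^2).ne',
      Real.log_pow]
    rw [← Real.exp_add, ← Real.exp_add, ← Real.exp_add, ← Real.exp_add, ← Real.exp_add,
      Real.exp_eq_exp]
    push_cast
    rw [Real.log_div hy0.ne' ht0.ne']
    ring
  rw [setIntegral_congr_fun measurableSet_Ioo hptw, MeasureTheory.integral_const_mul,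
    ← integral_Ioc_eq_integral_Ioo, ← integral_of_le hy1.le]
  have : ∫ t in y..(1:ℝ), (t-y) ^ (-(α/2)) * (1-t) ^ (α-2)
      = (1-y) ^ (α/2-1) * ∫ v in (0:ℝ)..1, v ^ (-(α/2)) * (1-v) ^ (α-2) := by
    rw [lin_sub' hy1, show -(α/2) + (α-2) + 1 = α/2 - 1 by ring]
  rw [this]
  ring


theorem stmt1 (α x : ℝ) (hα : 1 < α ∧ α < 2) (hx : x ∈ Set.Ioo (0:ℝ) 1) :
    (1 / Real.Gamma (2 - α)) *
      ∫ s in x..(1:ℝ), (s - x) ^ (1 - α) * s ^ (α/2 - 1) * (1 - s) ^ (α/2 - 1)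
    = (Real.Gamma (α/2) / Real.Gamma (1 - α/2)) *
      ∫ s in x..(1:ℝ), s ^ (-(α/2)) * (1 - s) ^ (-(α/2)) := by
  obtain ⟨h1, h2⟩ := hα
  obtain ⟨hx0, hx1⟩ := hx
  set g : ℝ → ℝ := fun r => r ^ (-(α/2)) * (1-r) ^ (-(α/2)) with hg
  set B2 : ℝ := ∫ v in (0:ℝ)..1, v ^ (-(α/2)) * (1-v) ^ (α-2) with hB2def
  set B1 : ℝ := ∫ v in (0:ℝ)..1, v ^ (1-α) * (1-v) ^ (α-2) with hB1def
  have hG1 : 0 < Real.Gamma (2-α) := Real.Gamma_pos_of_pos (by linarith)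
  have hG2 : 0 < Real.Gamma (α-1) := Real.Gamma_pos_of_pos (by linarith)
  have hG3 : 0 < Real.Gamma (α/2) := Real.Gamma_pos_of_pos (by linarith)
  have hG4 : 0 < Real.Gamma (1-α/2) := Real.Gamma_pos_of_pos (by linarith)
  have hB2 : B2 = Real.Gamma (1-α/2) * Real.Gamma (α-1) / Real.Gamma (α/2) := by
    rw [hB2def]
    have e : (fun v : ℝ => v ^ (-(α/2)) * (1-v) ^ (α-2))
        = fun v => v ^ ((1-α/2)-1) * (1-v) ^ ((α-1)-1) := by
      funext v; rw [show (1-α/2)-1 = -(α/2) by ring, show (α-1)-1 = α-2 by ring]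
    rw [e, real_beta (by linarith) (by linarith), show (1-α/2)+(α-1) = α/2 by ring]
  have hB1 : B1 = Real.Gamma (2-α) * Real.Gamma (α-1) := by
    rw [hB1def]
    have e : (fun v : ℝ => v ^ (1-α) * (1-v) ^ (α-2))
        = fun v => v ^ ((2-α)-1) * (1-v) ^ ((α-1)-1) := by
      funext v; rw [show (2-α)-1 = 1-α by ring, show (α-1)-1 = α-2 by ring]
    rw [e, real_beta (by linarith) (by linarith), show (2-α)+(α-1) = 1 by ring,
      Real.Gamma_one, div_one]
  have hB2pos : 0 < B2 := by rw [hB2]; positivity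
  set F : ℝ → ℝ → ℝ :=
    fun s r => if s < r then (s-x) ^ (1-α) * ((r-s) ^ (α-2) * g r) else 0 with hF
  -- pointwise lemA applications
  have hlemA : ∀ s ∈ Set.Ioo x (1:ℝ),
      (∫ r in s..(1:ℝ), (r-s) ^ (α-2) * g r)
        = (s ^ (α/2-1) * (1-s) ^ (α/2-1)) * B2 := by
    intro s hs
    simp only [hg]
    rw [lemA h1 h2 (lt_trans hx0 hs.1) hs.2, ← hB2def]
  -- indicator descriptions
  have eFs : ∀ s : ℝ, F s
      = Set.indicator (Set.Ioi s) (fun r => (s-x) ^ (1-α) * ((r-s) ^ (α-2) * g r)) := by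
    intro s; funext r
    rw [hF]
    beta_reduce
    rw [Set.indicator_apply]
    simp only [Set.mem_Ioi]
  have eFr : ∀ r : ℝ, (fun s => F s r)
      = Set.indicator (Set.Iio r) (fun s => ((s-x) ^ (1-α) * (r-s) ^ (α-2)) * g r) := by
    intro r; funext s
    rw [hF]
    beta_reduce
    rw [Set.indicator_apply]
    simp only [Set.mem_Iio]
    by_cases h : s < r
    · simp only [h, if_true, mul_assoc]
    · simp only [h, if_false]
  have hIoi : ∀ s ∈ Set.Ioo x (1:ℝ), Set.Ioi s ∩ Set.Ioo x 1 = Set.Ioo s 1 := by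
    intro s hs; ext r
    simp only [Set.mem_inter_iff, Set.mem_Ioi, Set.mem_Ioo]
    constructor
    · rintro ⟨h, _, h3⟩; exact ⟨h, h3⟩
    · rintro ⟨h, h3⟩; exact ⟨h, lt_trans hs.1 h, h3⟩
  have hIio : ∀ r ∈ Set.Ioo x (1:ℝ), Set.Iio r ∩ Set.Ioo x 1 = Set.Ioo x r := by
    intro r hr; ext s
    simp only [Set.mem_inter_iff, Set.mem_Iio, Set.mem_Ioo]
    constructor
    · rintro ⟨h, h2', _⟩; exact ⟨h2', h⟩
    · rintro ⟨h2', h⟩; exact ⟨h, h2', lt_trans h hr.2⟩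
  -- integrability of pieces
  have hinner : ∀ s ∈ Set.Ioo x (1:ℝ),
      IntervalIntegrable (fun r => (r-s) ^ (α-2) * g r) volume s 1 := by
    intro s hs
    have e : (fun r => (r-s) ^ (α-2) * g r)
        = fun r => (r-s) ^ (α-2) * (1-r) ^ (-(α/2)) * (r ^ (-(α/2))) := by
      funext r; simp only [hg]; ring
    rw [e]
    refine II_gen hs.2 (by linarith) (by linarith) ?_
    exact ContinuousOn.rpow_const continuousOn_id
      (fun r hr => Or.inl (lt_of_lt_of_le (lt_trans hx0 hs.1) hr.1).ne')
  have hmain : IntervalIntegrable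
      (fun s => (s-x) ^ (1-α) * s ^ (α/2-1) * (1-s) ^ (α/2-1)) volume x 1 := by
    have e : (fun s : ℝ => (s-x) ^ (1-α) * s ^ (α/2-1) * (1-s) ^ (α/2-1))
        = fun s => (s-x) ^ (1-α) * (1-s) ^ (α/2-1) * (s ^ (α/2-1)) := by
      funext s; ring
    rw [e]
    refine II_gen hx1 (by linarith) (by linarith) ?_
    exact ContinuousOn.rpow_const continuousOn_id
      (fun r hr => Or.inl (lt_of_lt_of_le hx0 hr.1).ne')
  have hgint : IntervalIntegrable g volume x 1 := by
    have e : g = fun r => (r-x) ^ ((0:ℝ)) * (1-r) ^ (-(α/2)) * (r ^ (-(α/2))) := by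
      funext r; simp only [hg, Real.rpow_zero]; ring
    rw [e]
    refine II_gen hx1 (by norm_num) (by linarith) ?_
    exact ContinuousOn.rpow_const continuousOn_id
      (fun r hr => Or.inl (lt_of_lt_of_le hx0 hr.1).ne')
  -- claim 1
  have claim1 : ∀ s ∈ Set.Ioo x (1:ℝ),
      (∫ r in Set.Ioo x (1:ℝ), F s r)
        = (s-x) ^ (1-α) * ∫ r in s..(1:ℝ), (r-s) ^ (α-2) * g r := by
    intro s hs
    rw [eFs s, MeasureTheory.integral_indicator measurableSet_Ioi,
      Measure.restrict_restrict measurableSet_Ioi, hIoi s hs, MeasureTheory.integral_const_mul,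
      ← integral_Ioc_eq_integral_Ioo, ← integral_of_le hs.2.le]
  -- claim 2
  have claim2 : ∀ r ∈ Set.Ioo x (1:ℝ),
      (∫ s in Set.Ioo x (1:ℝ), F s r) = B1 * g r := by
    intro r hr
    rw [eFr r, MeasureTheory.integral_indicator measurableSet_Iio,
      Measure.restrict_restrict measurableSet_Iio, hIio r hr, MeasureTheory.integral_mul_const,
      ← integral_Ioc_eq_integral_Ioo, ← integral_of_le hr.1.le, lin_sub' hr.1,
      show (1-α) + (α-2) + 1 = 0 by ring, Real.rpow_zero, one_mul, ← hB1def, mul_comm]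
  -- measurability
  have hφm : AEStronglyMeasurable (Function.uncurry F)
      ((volume.restrict (Set.Ioo x 1)).prod (volume.restrict (Set.Ioo x 1))) := by
    have e : Function.uncurry F = Set.indicator {p : ℝ × ℝ | p.1 < p.2}
        (fun p => (p.1-x) ^ (1-α) * ((p.2-p.1) ^ (α-2) *
          (p.2 ^ (-(α/2)) * (1-p.2) ^ (-(α/2))))) := by
      funext p
      cases p with
      | mk s r =>
        rw [Function.uncurry_apply_pair, hF]
        beta_reduce
        rw [Set.indicator_apply]
        simp only [Set.mem_setOf_eq, hg]
    rw [e]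
    exact (Measurable.indicator (by fun_prop)
      (measurableSet_lt measurable_fst measurable_snd)).aestronglyMeasurable
  -- integrability on the product
  have hintF : Integrable (Function.uncurry F)
      ((volume.restrict (Set.Ioo x 1)).prod (volume.restrict (Set.Ioo x 1))) := by
    rw [integrable_prod_iff hφm]
    constructor
    · refine (ae_restrict_iff' measurableSet_Ioo).mpr (ae_of_all _ ?_)
      intro s hs
      simp only [Function.uncurry_apply_pair]
      rw [eFs s, integrable_indicator_iff measurableSet_Ioi]
      rw [IntegrableOn, Measure.restrict_restrict measurableSet_Ioi, hIoi s hs]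
      exact (((intervalIntegrable_iff_integrableOn_Ioo_of_le hs.2.le).mp
        (hinner s hs))).const_mul _
    · have hnice : Integrable
          (fun s => B2 * ((s-x) ^ (1-α) * s ^ (α/2-1) * (1-s) ^ (α/2-1)))
          (volume.restrict (Set.Ioo x 1)) :=
        ((intervalIntegrable_iff_integrableOn_Ioo_of_le hx1.le).mp hmain).const_mul B2
      refine hnice.congr ?_
      refine (ae_restrict_iff' measurableSet_Ioo).mpr (ae_of_all _ ?_)
      intro s hs
      simp only [Function.uncurry_apply_pair]
      have hnorm : (∫ r in Set.Ioo x (1:ℝ), ‖F s r‖) = ∫ r in Set.Ioo x (1:ℝ), F s r := by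
        refine setIntegral_congr_fun measurableSet_Ioo ?_
        intro r hr
        show ‖F s r‖ = F s r
        rw [Real.norm_eq_abs, abs_of_nonneg]
        rw [hF]
        beta_reduce
        split
        · rename_i h
          refine mul_nonneg (Real.rpow_nonneg (by linarith [hs.1]) _)
            (mul_nonneg (Real.rpow_nonneg (by linarith) _) ?_)
          simp only [hg]
          exact mul_nonneg (Real.rpow_nonneg (le_of_lt (lt_trans hx0 hr.1)) _)
            (Real.rpow_nonneg (by linarith [hr.2]) _)
        · exact le_refl 0
      rw [show (∫ r, ‖F s r‖ ∂(volume.restrict (Set.Ioo x 1)))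
          = ∫ r in Set.Ioo x (1:ℝ), ‖F s r‖ from rfl, hnorm, claim1 s hs, hlemA s hs]
      ring
  have hswap := integral_integral_swap hintF
  -- assemble
  have stepA : (∫ s in x..(1:ℝ), (s - x) ^ (1 - α) * s ^ (α/2 - 1) * (1 - s) ^ (α/2 - 1))
      = B2⁻¹ * ∫ s in Set.Ioo x (1:ℝ),
          (s-x) ^ (1-α) * ∫ r in s..(1:ℝ), (r-s) ^ (α-2) * g r := by
    rw [integral_of_le hx1.le, integral_Ioc_eq_integral_Ioo, ← MeasureTheory.integral_const_mul]
    refine setIntegral_congr_fun measurableSet_Ioo ?_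
    intro s hs
    beta_reduce
    rw [hlemA s hs]
    field_simp
  have chain : (∫ s in Set.Ioo x (1:ℝ),
        (s-x) ^ (1-α) * ∫ r in s..(1:ℝ), (r-s) ^ (α-2) * g r)
      = B1 * ∫ r in Set.Ioo x (1:ℝ), g r := by
    have e0 : (∫ s in Set.Ioo x (1:ℝ),
          (s-x) ^ (1-α) * ∫ r in s..(1:ℝ), (r-s) ^ (α-2) * g r)
        = ∫ s in Set.Ioo x (1:ℝ), ∫ r in Set.Ioo x (1:ℝ), F s r :=
      setIntegral_congr_fun measurableSet_Ioo (fun s hs => (claim1 s hs).symm)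
    have e1 : (∫ r in Set.Ioo x (1:ℝ), ∫ s in Set.Ioo x (1:ℝ), F s r)
        = ∫ r in Set.Ioo x (1:ℝ), B1 * g r :=
      setIntegral_congr_fun measurableSet_Ioo (fun r hr => claim2 r hr)
    rw [e0, hswap, e1, MeasureTheory.integral_const_mul]
  have hC : 1 / Real.Gamma (2-α) * (B2⁻¹ * (B1 * (∫ s in x..(1:ℝ), g s)))
      = Real.Gamma (α/2) / Real.Gamma (1-α/2) * ∫ s in x..(1:ℝ), g s := by
    have alg : ∀ (G1 G2 G3 G4 I : ℝ), G1 ≠ 0 → G2 ≠ 0 → G3 ≠ 0 → G4 ≠ 0 →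
        1/G1 * ((G4 * G2 / G3)⁻¹ * (G1 * G2 * I)) = G3/G4 * I := by
      intro G1 G2 G3 G4 I n1 n2 n3 n4
      field_simp
    rw [hB1, hB2]
    exact alg _ _ _ _ _ hG1.ne' hG2.ne' hG3.ne' hG4.ne'
  rw [stepA, chain,
    show (∫ r in Set.Ioo x (1:ℝ), g r) = ∫ r in x..(1:ℝ), g r by
      rw [integral_of_le hx1.le, integral_Ioc_eq_integral_Ioo]]
  exact hC
end

section
/- Let 1 < α < 2 and let p, q ∈ (−1, 0) satisfy p + q = α − 2 and r·sin(−πq) = (1−r)·sin(−πp) for some r ∈ (0,1). Then for k(x) = x^p (1−x)^q, the function x ↦ r·D𝐃^{−(2−α)}k(x) + (1−r)·D𝐃^{−(2−α)*}k(x) is identically zero on (0,1). -/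
open intervalIntegral

open Set MeasureTheory

set_option maxHeartbeats 1000000

-- generic beta-type integrability
lemma betaInt {a b u v : ℝ} (hab : a < b) (hu : -1 < u) (hv : -1 < v) {w : ℝ → ℝ}
    (hw : ContinuousOn w (Icc a b)) :
    IntegrableOn (fun t => (t - a) ^ u * (b - t) ^ v * w t) (Ioo a b) := by
  set m := (a + b) / 2 with hm
  have ham : a < m := by simp [hm]; linarith
  have hmb : m < b := by simp [hm]; linarith
  have hf_meas : AEStronglyMeasurable (fun t : ℝ => (t - a) ^ u * (b - t) ^ v * w t)
      (volume.restrict (Ioo a b)) := by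
    apply ContinuousOn.aestronglyMeasurable _ measurableSet_Ioo
    apply ContinuousOn.mul
    apply ContinuousOn.mul
    · exact (continuousOn_id.sub continuousOn_const).rpow_const
        (fun t ht => Or.inl (by simp; linarith [ht.1]))
    · exact (continuousOn_const.sub continuousOn_id).rpow_const
        (fun t ht => Or.inl (by simp; linarith [ht.2]))
    · exact hw.mono (fun t ht => ⟨ht.1.le, ht.2.le⟩)
  -- bound on left piece
  obtain ⟨C₁, hC₁⟩ : ∃ C, ∀ t ∈ Icc a m, ‖(b - t) ^ v * w t‖ ≤ C := by
    apply IsCompact.exists_bound_of_continuousOn isCompact_Icc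
    apply ContinuousOn.mul
    · exact (continuousOn_const.sub continuousOn_id).rpow_const
        (fun t ht => Or.inl (by simp; linarith [ht.2]))
    · exact hw.mono (fun t ht => ⟨ht.1, le_trans ht.2 hmb.le⟩)
  obtain ⟨C₂, hC₂⟩ : ∃ C, ∀ t ∈ Icc m b, ‖(t - a) ^ u * w t‖ ≤ C := by
    apply IsCompact.exists_bound_of_continuousOn isCompact_Icc
    apply ContinuousOn.mul
    · exact (continuousOn_id.sub continuousOn_const).rpow_const
        (fun t ht => Or.inl (by simp; linarith [ht.1]))
    · exact hw.mono (fun t ht => ⟨le_trans ham.le ht.1, ht.2⟩)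
  have int1 : IntegrableOn (fun t : ℝ => (t - a) ^ u) (Ioo a m) := by
    have := (intervalIntegral.intervalIntegrable_rpow' (a := 0) (b := m - a) hu).comp_sub_right a
    rw [intervalIntegrable_iff_integrableOn_Ioo_of_le (by linarith)] at this
    simpa using this
  have int2 : IntegrableOn (fun t : ℝ => (b - t) ^ v) (Ioo m b) := by
    have := ((intervalIntegral.intervalIntegrable_rpow' (a := 0) (b := b - m) hv).comp_sub_left b).symm
    rw [intervalIntegrable_iff_integrableOn_Ioo_of_le (by simp; linarith)] at this
    simpa using this
  have left : IntegrableOn (fun t => (t - a) ^ u * (b - t) ^ v * w t) (Ioo a m) := by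
    apply Integrable.mono' (int1.smul_const <| max C₁ 0)
    · exact hf_meas.mono_measure (Measure.restrict_mono (Set.Ioo_subset_Ioo le_rfl hmb.le) le_rfl)
    · filter_upwards [ae_restrict_mem measurableSet_Ioo] with t ht
      have h1 : (0:ℝ) ≤ (t - a) ^ u := Real.rpow_nonneg (by linarith [ht.1]) _
      calc ‖(t - a) ^ u * (b - t) ^ v * w t‖ = (t - a) ^ u * ‖(b - t) ^ v * w t‖ := by
            rw [mul_assoc, norm_mul]; simp [abs_of_nonneg h1]
        _ ≤ (t - a) ^ u * max C₁ 0 := by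
            apply mul_le_mul_of_nonneg_left _ h1
            exact le_trans (hC₁ t ⟨ht.1.le, ht.2.le⟩) (le_max_left _ _)
        _ = _ := by simp [smul_eq_mul]
  have right : IntegrableOn (fun t => (t - a) ^ u * (b - t) ^ v * w t) (Ioo m b) := by
    apply Integrable.mono' (int2.smul_const <| max C₂ 0)
    · exact hf_meas.mono_measure (Measure.restrict_mono (Set.Ioo_subset_Ioo ham.le le_rfl) le_rfl)
    · filter_upwards [ae_restrict_mem measurableSet_Ioo] with t ht
      have h1 : (0:ℝ) ≤ (b - t) ^ v := Real.rpow_nonneg (by linarith [ht.2]) _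
      calc ‖(t - a) ^ u * (b - t) ^ v * w t‖ = (b - t) ^ v * ‖(t - a) ^ u * w t‖ := by
            rw [norm_mul, norm_mul, norm_mul, Real.norm_eq_abs ((b-t)^v), abs_of_nonneg h1]
            ring
        _ ≤ (b - t) ^ v * max C₂ 0 := by
            apply mul_le_mul_of_nonneg_left _ h1
            exact le_trans (hC₂ t ⟨ht.1.le, ht.2.le⟩) (le_max_left _ _)
        _ = _ := by simp [smul_eq_mul]
  have : Ioo a b ⊆ Ioo a m ∪ Icc m b := by
    intro t ht; rcases le_or_gt m t with h | h
    · exact Or.inr ⟨h, ht.2.le⟩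
    · exact Or.inl ⟨ht.1, h⟩
  refine IntegrableOn.mono_set ?_ this
  refine left.union ?_
  rwa [← integrableOn_Icc_iff_integrableOn_Ioo] at right

lemma realBeta {a b : ℝ} (ha : 0 < a) (hb : 0 < b) :
    ∫ v in (0:ℝ)..1, v ^ (a - 1) * (1 - v) ^ (b - 1)
      = Real.Gamma a * Real.Gamma b / Real.Gamma (a + b) := by
  have h1 : ((∫ v in (0:ℝ)..1, v ^ (a - 1) * (1 - v) ^ (b - 1) : ℝ) : ℂ)
      = Complex.betaIntegral a b := by
    rw [← intervalIntegral.integral_ofReal]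
    rw [Complex.betaIntegral]
    apply intervalIntegral.integral_congr
    intro x hx
    rw [uIcc_of_le (by norm_num : (0:ℝ) ≤ 1)] at hx
    push_cast
    rw [Complex.ofReal_cpow hx.1, Complex.ofReal_cpow (by linarith [hx.2] : (0:ℝ) ≤ 1 - x)]
    push_cast
    ring
  have h2 := Complex.Gamma_mul_Gamma_eq_betaIntegral
    (by simpa using ha : 0 < (a:ℂ).re) (by simpa using hb : 0 < (b:ℂ).re)
  have hG : Complex.Gamma ((a:ℂ) + b) ≠ 0 := by
    rw [show ((a:ℂ) + b) = ((a + b : ℝ) : ℂ) by push_cast; ring, Complex.Gamma_ofReal]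
    have : Real.Gamma (a + b) ≠ 0 := by
      have := Real.Gamma_pos_of_pos (by linarith : 0 < a + b)
      linarith
    exact_mod_cast this
  have h3 : Complex.betaIntegral a b
      = Complex.Gamma a * Complex.Gamma b / Complex.Gamma ((a:ℂ) + b) := by
    rw [eq_div_iff hG, mul_comm (Complex.betaIntegral _ _) _, ← h2]
  rw [h3] at h1
  rw [show ((a:ℂ) + b) = ((a + b : ℝ) : ℂ) by push_cast; ring] at h1
  rw [Complex.Gamma_ofReal, Complex.Gamma_ofReal, Complex.Gamma_ofReal] at h1
  exact_mod_cast h1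

lemma subMain {σ p q s : ℝ} (hσ0 : 0 < σ) (hσ1 : σ < 1)
    (hpq : p + q = -σ) (hs1 : 0 < s) (hs2 : s < 1) :
    ∫ t in Ioo (0:ℝ) s, (s - t) ^ (-σ) * (t ^ (-q - 1) * (1 - t) ^ (-p - 1))
      = (s ^ p * (1 - s) ^ q) * ∫ v in Ioo (0:ℝ) 1, v ^ (-σ) * (1 - v) ^ (-q - 1) := by
  set φ : ℝ → ℝ := fun v => s * (1 - v) / (1 - s * v) with hφdef
  set φ' : ℝ → ℝ := fun v => s * (s - 1) / (1 - s * v) ^ 2 with hφ'def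
  have hden : ∀ v ∈ Ioo (0:ℝ) 1, 0 < 1 - s * v := by
    intro v hv; nlinarith [hv.1, hv.2]
  have hderiv : ∀ v ∈ Ioo (0:ℝ) 1, HasDerivWithinAt φ (φ' v) (Ioo (0:ℝ) 1) v := by
    intro v hv
    have hd := hden v hv
    have hN : HasDerivAt (fun v : ℝ => s * (1 - v)) (-s) v := by
      simpa using ((hasDerivAt_id v).const_sub 1).const_mul s
    have hD : HasDerivAt (fun v : ℝ => 1 - s * v) (-s) v := by
      simpa using ((hasDerivAt_id v).const_mul s).const_sub 1
    have := hN.div hD hd.ne'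
    apply HasDerivAt.hasDerivWithinAt
    exact this.congr_deriv (by show _ = s * (s - 1) / (1 - s * v) ^ 2; ring)
  have hinj : InjOn φ (Ioo (0:ℝ) 1) := by
    intro v1 h1 v2 h2 heq
    have hd1 := hden v1 h1
    have hd2 := hden v2 h2
    rw [hφdef] at heq
    simp only at heq
    rw [div_eq_div_iff hd1.ne' hd2.ne'] at heq
    have : s * (1 - s) * (v2 - v1) = 0 := by linear_combination heq
    have hss : 0 < s * (1 - s) := by nlinarith
    have : v2 - v1 = 0 := by
      rcases mul_eq_zero.1 this with h | h
      · exact absurd h hss.ne'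
      · exact h
    linarith
  have him : φ '' Ioo (0:ℝ) 1 = Ioo 0 s := by
    ext t
    constructor
    · rintro ⟨v, hv, rfl⟩
      have hd := hden v hv
      constructor
      · apply div_pos _ hd; nlinarith [hv.1, hv.2]
      · rw [div_lt_iff₀ hd]; nlinarith [mul_pos (mul_pos hs1 hv.1) (sub_pos.2 hs2)]
    · intro ht
      refine ⟨(s - t) / (s * (1 - t)), ⟨?_, ?_⟩, ?_⟩
      · apply div_pos (by linarith [ht.2]) (by nlinarith [ht.1, ht.2])
      · rw [div_lt_one (by nlinarith [ht.1, ht.2])]; nlinarith [ht.1, ht.2]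
      · have h1t : (0:ℝ) < 1 - t := by nlinarith [ht.2]
        have hst : (0:ℝ) < s * (1 - t) := by positivity
        have hkey : 1 - s * ((s - t) / (s * (1 - t))) = (1 - s) / (1 - t) := by
          field_simp
          ring
        rw [hφdef]
        simp only
        rw [hkey]
        have h1s : (0:ℝ) < 1 - s := by linarith
        field_simp
        ring
  have hchg := MeasureTheory.integral_image_eq_integral_abs_deriv_smul measurableSet_Ioo hderiv hinj
    (fun t => (s - t) ^ (-σ) * (t ^ (-q - 1) * (1 - t) ^ (-p - 1)))
  rw [him] at hchg
  rw [hchg]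
  rw [show (s ^ p * (1 - s) ^ q) * ∫ v in Ioo (0:ℝ) 1, v ^ (-σ) * (1 - v) ^ (-q - 1)
      = ∫ v in Ioo (0:ℝ) 1, (s ^ p * (1 - s) ^ q) * (v ^ (-σ) * (1 - v) ^ (-q - 1)) from
    (MeasureTheory.integral_const_mul _ _).symm]
  apply setIntegral_congr_fun measurableSet_Ioo
  intro v hv
  have hv1 : (0:ℝ) < v := hv.1
  have hv2 : v < 1 := hv.2
  have hd : (0:ℝ) < 1 - s * v := hden v hv
  have h1s : (0:ℝ) < 1 - s := by linarith
  have h1v : (0:ℝ) < 1 - v := by linarith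
  -- rewrite φ values
  have hA : s - φ v = s * v * (1 - s) / (1 - s * v) := by
    rw [hφdef]; field_simp; ring
  have hB : (1:ℝ) - φ v = (1 - s) / (1 - s * v) := by
    rw [hφdef]; field_simp; ring
  have hC : φ v = s * (1 - v) / (1 - s * v) := rfl
  have habs : |φ' v| = s * (1 - s) / (1 - s * v) ^ 2 := by
    rw [hφ'def]
    simp only
    rw [show s * (s - 1) / (1 - s * v) ^ 2 = -(s * (1 - s) / (1 - s * v) ^ 2) by ring]
    rw [abs_neg, abs_of_pos (by positivity)]
  simp only [smul_eq_mul]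
  rw [habs, hA, hB, hC]
  -- now pure rpow algebra
  have L : ∀ x : ℝ, 0 < x → ∀ e : ℝ, x ^ e = Real.exp (e * Real.log x) :=
    fun x hx e => by rw [Real.rpow_def_of_pos hx, mul_comm]
  rw [L _ (by positivity) (-σ), L _ (by positivity) (-q-1), L _ (by positivity) (-p-1),
     L _ hs1 p, L _ h1s q, L _ hv1 (-σ), L _ h1v (-q-1)]
  have hfac : s * (1 - s) / (1 - s * v) ^ 2
      = Real.exp (Real.log s + Real.log (1 - s) - 2 * Real.log (1 - s * v)) := by
    rw [Real.exp_sub, Real.exp_add, Real.exp_log hs1, Real.exp_log h1s, two_mul, Real.exp_add,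
      Real.exp_log hd]
    ring
  rw [hfac]
  rw [Real.log_div (by positivity) (by positivity), Real.log_mul (by positivity) (by positivity),
    Real.log_mul (by positivity) (by positivity)]
  rw [Real.log_div (by positivity) (by positivity), Real.log_mul (by positivity) (by positivity)]
  rw [Real.log_div (by positivity) (by positivity)]
  simp only [← Real.exp_add]
  rw [Real.exp_eq_exp]
  linear_combination (-(Real.log s) - Real.log (1 - s) + Real.log (1 - s * v)) * hpq

lemma innerBeta {σ t y : ℝ} (ht : t < y) :
    ∫ s in Ioo t y, (y - s) ^ (σ - 1) * (s - t) ^ (-σ)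
      = ∫ v in Ioo (0:ℝ) 1, v ^ (-σ) * (1 - v) ^ (σ - 1) := by
  set ψ : ℝ → ℝ := fun v => t + (y - t) * v with hψdef
  have hyt : (0:ℝ) < y - t := by linarith
  have hderiv : ∀ v ∈ Ioo (0:ℝ) 1, HasDerivWithinAt ψ (y - t) (Ioo (0:ℝ) 1) v := by
    intro v hv
    have := (((hasDerivAt_id v).const_mul (y - t)).const_add t).hasDerivWithinAt
      (s := Ioo (0:ℝ) 1)
    simpa [hψdef] using this
  have hinj : InjOn ψ (Ioo (0:ℝ) 1) := by
    intro v1 _ v2 _ heq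
    simp only [hψdef] at heq
    have := mul_left_cancel₀ hyt.ne' (by linarith : (y - t) * v1 = (y - t) * v2)
    exact this
  have him : ψ '' Ioo (0:ℝ) 1 = Ioo t y := by
    ext x
    constructor
    · rintro ⟨v, hv, rfl⟩
      constructor
      · simp only [hψdef]; nlinarith [hv.1]
      · simp only [hψdef]; nlinarith [hv.2]
    · intro hx
      refine ⟨(x - t) / (y - t), ⟨div_pos (by linarith [hx.1]) hyt, ?_⟩, ?_⟩
      · rw [div_lt_one hyt]; linarith [hx.2]
      · simp only [hψdef]; field_simp; ring
  have hchg := MeasureTheory.integral_image_eq_integral_abs_deriv_smul measurableSet_Ioo hderiv hinj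
    (fun s => (y - s) ^ (σ - 1) * (s - t) ^ (-σ))
  rw [him] at hchg
  rw [hchg]
  apply setIntegral_congr_fun measurableSet_Ioo
  intro v hv
  have hv1 : (0:ℝ) < v := hv.1
  have h1v : (0:ℝ) < 1 - v := by linarith [hv.2]
  simp only [smul_eq_mul, hψdef]
  have e1 : y - (t + (y - t) * v) = (y - t) * (1 - v) := by ring
  have e2 : t + (y - t) * v - t = (y - t) * v := by ring
  rw [e1, e2]
  rw [Real.mul_rpow hyt.le h1v.le, Real.mul_rpow hyt.le hv1.le, abs_of_pos hyt]
  have L : ∀ x : ℝ, 0 < x → ∀ e : ℝ, x ^ e = Real.exp (e * Real.log x) :=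
    fun x hx e => by rw [Real.rpow_def_of_pos hx, mul_comm]
  have key : (y - t) * ((y - t) ^ (σ-1) * (y - t) ^ (-σ)) = 1 := by
    rw [L _ hyt (σ-1), L _ hyt (-σ), ← Real.exp_add,
      show (y - t) = Real.exp (Real.log (y-t)) from (Real.exp_log hyt).symm, ← Real.exp_add]
    rw [show Real.log (Real.exp (Real.log (y-t))) = Real.log (y - t) from by
      rw [Real.log_exp]]
    rw [show Real.log (y-t) + ((σ - 1) * Real.log (y - t) + -σ * Real.log (y-t)) = 0 by ring,
      Real.exp_zero]
  calc (y-t) * ((y - t) ^ (σ-1) * (1-v) ^ (σ-1) * ((y-t) ^ (-σ) * v ^ (-σ)))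
      = ((y - t) * ((y - t) ^ (σ-1) * (y - t) ^ (-σ))) * (v ^ (-σ) * (1-v) ^ (σ-1)) := by ring
    _ = v ^ (-σ) * (1-v) ^ (σ-1) := by rw [key, one_mul]

lemma main1 {σ p q y : ℝ} (hσ0 : 0 < σ) (hσ1 : σ < 1) (hp1 : -1 < p) (hp0 : p < 0)
    (hq1 : -1 < q) (hq0 : q < 0) (hpq : p + q = -σ) (hy1 : 0 < y) (hy2 : y < 1) :
    (∫ v in Ioo (0:ℝ) 1, v ^ (-σ) * (1 - v) ^ (-q - 1)) *
        ∫ s in Ioo (0:ℝ) y, (y - s) ^ (σ - 1) * (s ^ p * (1 - s) ^ q)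
      = (∫ v in Ioo (0:ℝ) 1, v ^ (-σ) * (1 - v) ^ (σ - 1)) *
        ∫ t in Ioo (0:ℝ) y, t ^ (-q - 1) * (1 - t) ^ (-p - 1) := by
  set c₁ : ℝ := ∫ v in Ioo (0:ℝ) 1, v ^ (-σ) * (1 - v) ^ (-q - 1) with hc₁
  set c₂ : ℝ := ∫ v in Ioo (0:ℝ) 1, v ^ (-σ) * (1 - v) ^ (σ - 1) with hc₂
  set g : ℝ → ℝ := fun t => t ^ (-q - 1) * (1 - t) ^ (-p - 1) with hg
  set f : ℝ → ℝ → ℝ := fun s t =>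
    if t < s then (y - s) ^ (σ - 1) * ((s - t) ^ (-σ) * g t) else 0 with hf
  -- inner-integral evaluation, used twice
  have hA : ∀ s ∈ Ioo (0:ℝ) y, ∫ t in Ioo (0:ℝ) y, f s t
      = (y - s) ^ (σ - 1) * ((s ^ p * (1 - s) ^ q) * c₁) := by
    intro s hs
    have h1 : ∫ t in Ioo (0:ℝ) y, f s t
        = ∫ t in Ioo (0:ℝ) y, (Ioo (0:ℝ) s).indicator
            (fun t => (y - s) ^ (σ - 1) * ((s - t) ^ (-σ) * g t)) t := by
      apply setIntegral_congr_fun measurableSet_Ioo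
      intro t ht
      by_cases h : t < s
      · rw [hf]; simp only [if_pos h, Set.indicator_apply]
        rw [if_pos (show t ∈ Ioo (0:ℝ) s from ⟨ht.1, h⟩)]
      · rw [hf]; simp only [if_neg h, Set.indicator_apply]
        rw [if_neg (show t ∉ Ioo (0:ℝ) s from fun hmem => h hmem.2)]
    rw [h1, setIntegral_indicator measurableSet_Ioo,
      inter_eq_right.mpr (Ioo_subset_Ioo le_rfl hs.2.le),
      MeasureTheory.integral_const_mul, subMain hσ0 hσ1 hpq hs.1 (hs.2.trans hy2)]
  -- integrability of the kernel on the product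
  have hmeas : AEStronglyMeasurable (Function.uncurry f)
      (((volume : Measure ℝ).restrict (Ioo 0 y)).prod ((volume : Measure ℝ).restrict (Ioo 0 y))) := by
    apply Measurable.aestronglyMeasurable
    apply Measurable.ite (measurableSet_lt measurable_snd measurable_fst) _ measurable_const
    fun_prop
  have hnonneg : ∀ s ∈ Ioo (0:ℝ) y, ∀ t ∈ Ioo (0:ℝ) y, 0 ≤ f s t := by
    intro s hs t ht
    rw [hf]
    by_cases h : t < s
    · simp only [if_pos h]
      have h1 : (0:ℝ) ≤ y - s := by linarith [hs.2]
      have h2 : (0:ℝ) ≤ s - t := by linarith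
      have h3 : (0:ℝ) ≤ t := ht.1.le
      have h4 : (0:ℝ) ≤ 1 - t := by linarith [ht.2, hy2]
      rw [hg]
      positivity
    · simp [if_neg h]
  have hbase : ∀ s ∈ Ioo (0:ℝ) y, IntegrableOn
      (fun t => (y - s) ^ (σ - 1) * ((s - t) ^ (-σ) * g t)) (Ioo (0:ℝ) s) := by
    intro s hs
    have hw : ContinuousOn (fun t : ℝ => (y - s) ^ (σ - 1) * (1 - t) ^ (-p - 1)) (Icc 0 s) := by
      apply continuousOn_const.mul
      apply (continuousOn_const.sub continuousOn_id).rpow_const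
      intro t ht
      left
      simp only [Pi.sub_apply, id]
      have := ht.2
      have hsy : s < 1 := hs.2.trans hy2
      intro hcon
      nlinarith [ht.2]
    have := betaInt hs.1 (by linarith : (-1:ℝ) < -q - 1) (by linarith : (-1:ℝ) < -σ) hw
    apply this.congr_fun _ measurableSet_Ioo
    intro t ht
    simp only [hg, sub_zero]
    ring
  have hintf : Integrable (Function.uncurry f)
      (((volume : Measure ℝ).restrict (Ioo 0 y)).prod ((volume : Measure ℝ).restrict (Ioo 0 y))) := by
    rw [MeasureTheory.integrable_prod_iff hmeas]
    constructor
    · filter_upwards [ae_restrict_mem measurableSet_Ioo] with s hs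
      have heq : (fun t => f s t) =ᵐ[(volume : Measure ℝ).restrict (Ioo 0 y)]
          (Ioo (0:ℝ) s).indicator (fun t => (y - s) ^ (σ - 1) * ((s - t) ^ (-σ) * g t)) := by
        rw [Filter.EventuallyEq, ae_restrict_iff' measurableSet_Ioo]
        filter_upwards with t ht
        by_cases h : t < s
        · rw [hf]; simp only [if_pos h, Set.indicator_apply]
          rw [if_pos (show t ∈ Ioo (0:ℝ) s from ⟨ht.1, h⟩)]
        · rw [hf]; simp only [if_neg h, Set.indicator_apply]
          rw [if_neg (show t ∉ Ioo (0:ℝ) s from fun hmem => h hmem.2)]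
      exact (((hbase s hs).integrable_indicator measurableSet_Ioo).integrableOn).congr heq.symm
    · have heq : (fun s => ∫ t in Ioo (0:ℝ) y, ‖f s t‖) =ᵐ[(volume : Measure ℝ).restrict (Ioo 0 y)]
          (fun s => (y - s) ^ (σ - 1) * ((s ^ p * (1 - s) ^ q) * c₁)) := by
        rw [Filter.EventuallyEq, ae_restrict_iff' measurableSet_Ioo]
        filter_upwards with s hs
        rw [← hA s hs]
        apply setIntegral_congr_fun measurableSet_Ioo
        intro t ht
        exact Real.norm_of_nonneg (hnonneg s hs t ht)
      apply Integrable.congr _ heq.symm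
      have hw2 : ContinuousOn (fun s : ℝ => (1 - s) ^ q * c₁) (Icc 0 y) := by
        apply ContinuousOn.mul _ continuousOn_const
        apply (continuousOn_const.sub continuousOn_id).rpow_const
        intro s hs
        left
        simp only [Pi.sub_apply, id]
        intro hcon
        nlinarith [hs.2]
      have := betaInt hy1 hp1 (by linarith : (-1:ℝ) < σ - 1) hw2
      apply this.congr_fun _ measurableSet_Ioo
      intro s hs
      simp only [sub_zero]
      ring
  -- Fubini
  have hswap := MeasureTheory.integral_integral_swap hintf
  -- evaluate both sides
  have lhs_eq : ∫ s in Ioo (0:ℝ) y, ∫ t in Ioo (0:ℝ) y, f s t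
      = c₁ * ∫ s in Ioo (0:ℝ) y, (y - s) ^ (σ - 1) * (s ^ p * (1 - s) ^ q) := by
    rw [← MeasureTheory.integral_const_mul]
    apply setIntegral_congr_fun measurableSet_Ioo
    intro s hs
    dsimp only
    rw [hA s hs]
    ring
  have rhs_eq : ∫ t in Ioo (0:ℝ) y, ∫ s in Ioo (0:ℝ) y, f s t
      = c₂ * ∫ t in Ioo (0:ℝ) y, g t := by
    rw [← MeasureTheory.integral_const_mul]
    apply setIntegral_congr_fun measurableSet_Ioo
    intro t ht
    dsimp only
    have h1 : ∫ s in Ioo (0:ℝ) y, f s t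
        = ∫ s in Ioo (0:ℝ) y, (Ioo t y).indicator
            (fun s => (y - s) ^ (σ - 1) * ((s - t) ^ (-σ) * g t)) s := by
      apply setIntegral_congr_fun measurableSet_Ioo
      intro s hs
      by_cases h : t < s
      · rw [hf]; simp only [if_pos h, Set.indicator_apply]
        rw [if_pos (show s ∈ Ioo t y from ⟨h, hs.2⟩)]
      · rw [hf]; simp only [if_neg h, Set.indicator_apply]
        rw [if_neg (show s ∉ Ioo t y from fun hmem => h hmem.1)]
    rw [h1, setIntegral_indicator measurableSet_Ioo,
      inter_eq_right.mpr (Ioo_subset_Ioo ht.1.le le_rfl)]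
    have h2 : ∫ s in Ioo t y, (y - s) ^ (σ - 1) * ((s - t) ^ (-σ) * g t)
        = (∫ s in Ioo t y, (y - s) ^ (σ - 1) * (s - t) ^ (-σ)) * g t := by
      rw [← MeasureTheory.integral_mul_const]
      congr 1
      funext s
      ring
    rw [h2, innerBeta ht.2]
  rw [lhs_eq, rhs_eq] at hswap
  exact hswap

lemma c1pos {σ q : ℝ} (hσ0 : 0 < σ) (hσ1 : σ < 1) (hq1 : -1 < q) (hq0 : q < 0) :
    0 < ∫ v in Ioo (0:ℝ) 1, v ^ (-σ) * (1 - v) ^ (-q - 1) := by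
  have hint : IntegrableOn (fun v : ℝ => v ^ (-σ) * (1 - v) ^ (-q - 1)) (Ioo 0 1) := by
    have := betaInt (zero_lt_one) (by linarith : (-1:ℝ) < -σ) (by linarith : (-1:ℝ) < -q - 1)
      (continuousOn_const : ContinuousOn (fun _ : ℝ => (1:ℝ)) (Icc 0 1))
    apply this.congr_fun _ measurableSet_Ioo
    intro t ht
    simp only [sub_zero, mul_one]
  have hnn : 0 ≤ᵐ[(volume : Measure ℝ).restrict (Ioo 0 1)]
      fun v : ℝ => v ^ (-σ) * (1 - v) ^ (-q - 1) := by
    rw [Filter.EventuallyLE, ae_restrict_iff' measurableSet_Ioo]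
    filter_upwards with v hv
    have := hv.1.le
    have : (0:ℝ) ≤ 1 - v := by linarith [hv.2]
    positivity
  rw [setIntegral_pos_iff_support_of_nonneg_ae hnn hint]
  have hsub : Ioo (0:ℝ) 1 ⊆ Function.support (fun v : ℝ => v ^ (-σ) * (1 - v) ^ (-q - 1)) := by
    intro v hv
    have h1 : (0:ℝ) < v := hv.1
    have h2 : (0:ℝ) < 1 - v := by linarith [hv.2]
    simp only [Function.mem_support]
    positivity
  rw [inter_eq_right.mpr hsub]
  simp

lemma main2 {σ p q x : ℝ} (hσ0 : 0 < σ) (hσ1 : σ < 1) (hp1 : -1 < p) (hp0 : p < 0)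
    (hq1 : -1 < q) (hq0 : q < 0) (hpq : p + q = -σ) (hx1 : 0 < x) (hx2 : x < 1) :
    HasDerivAt (fun y => ∫ s in (0:ℝ)..y, (y - s) ^ (σ - 1) * (s ^ p * (1 - s) ^ q))
      (((∫ v in Ioo (0:ℝ) 1, v ^ (-σ) * (1 - v) ^ (σ - 1)) /
        (∫ v in Ioo (0:ℝ) 1, v ^ (-σ) * (1 - v) ^ (-q - 1))) *
        (x ^ (-q - 1) * (1 - x) ^ (-p - 1))) x := by
  set c₁ : ℝ := ∫ v in Ioo (0:ℝ) 1, v ^ (-σ) * (1 - v) ^ (-q - 1) with hc₁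
  set c₂ : ℝ := ∫ v in Ioo (0:ℝ) 1, v ^ (-σ) * (1 - v) ^ (σ - 1) with hc₂
  set g : ℝ → ℝ := fun t => t ^ (-q - 1) * (1 - t) ^ (-p - 1) with hg
  have hc₁pos : 0 < c₁ := c1pos hσ0 hσ1 hq1 hq0
  -- FTC for Φ
  have hgint : ∀ z ∈ Ioo (0:ℝ) 1, IntervalIntegrable g volume 0 z := by
    intro z hz
    rw [intervalIntegrable_iff_integrableOn_Ioo_of_le hz.1.le]
    have hw : ContinuousOn (fun t : ℝ => (1 - t) ^ (-p - 1)) (Icc 0 z) := by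
      apply (continuousOn_const.sub continuousOn_id).rpow_const
      intro t ht
      left
      simp only [Pi.sub_apply, id]
      intro hcon
      nlinarith [ht.2, hz.2]
    have := betaInt hz.1 (by linarith : (-1:ℝ) < -q - 1) (by linarith : (-1:ℝ) < (0:ℝ)) hw
    apply this.congr_fun _ measurableSet_Ioo
    intro t ht
    simp only [hg, sub_zero, Real.rpow_zero, mul_one]
  have hgcont : ContinuousOn g (Ioo (0:ℝ) 1) := by
    apply ContinuousOn.mul
    · apply continuousOn_id.rpow_const
      intro t ht; left; exact ne_of_gt ht.1
    · apply (continuousOn_const.sub continuousOn_id).rpow_const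
      intro t ht; left; simp only [Pi.sub_apply, id]; intro hcon; nlinarith [ht.2]
  have hΦ : HasDerivAt (fun z => ∫ t in (0:ℝ)..z, g t) (g x) x := by
    apply intervalIntegral.integral_hasDerivAt_right (hgint x ⟨hx1, hx2⟩)
    · exact hgcont.stronglyMeasurableAtFilter isOpen_Ioo x ⟨hx1, hx2⟩
    · exact hgcont.continuousAt (isOpen_Ioo.mem_nhds ⟨hx1, hx2⟩)
  have hev : (fun y => ∫ s in (0:ℝ)..y, (y - s) ^ (σ - 1) * (s ^ p * (1 - s) ^ q))
      =ᶠ[nhds x] (fun z => (c₂ / c₁) * ∫ t in (0:ℝ)..z, g t) := by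
    filter_upwards [isOpen_Ioo.mem_nhds (⟨hx1, hx2⟩ : x ∈ Ioo (0:ℝ) 1)] with y hy
    have h1 : ∫ s in (0:ℝ)..y, (y - s) ^ (σ - 1) * (s ^ p * (1 - s) ^ q)
        = ∫ s in Ioo (0:ℝ) y, (y - s) ^ (σ - 1) * (s ^ p * (1 - s) ^ q) := by
      rw [intervalIntegral.integral_of_le hy.1.le, integral_Ioc_eq_integral_Ioo]
    have h2 : ∫ t in (0:ℝ)..y, g t = ∫ t in Ioo (0:ℝ) y, g t := by
      rw [intervalIntegral.integral_of_le hy.1.le, integral_Ioc_eq_integral_Ioo]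
    have hm := main1 hσ0 hσ1 hp1 hp0 hq1 hq0 hpq hy.1 hy.2
    rw [h1, h2]
    rw [← hc₁, ← hc₂] at hm
    rw [div_mul_eq_mul_div, eq_div_iff hc₁pos.ne']
    linarith [hm]
  exact ((hΦ.const_mul (c₂ / c₁)).congr_of_eventuallyEq hev)

theorem stmt3 (α p q r : ℝ) (hα : 1 < α ∧ α < 2)
    (hp : p ∈ Set.Ioo (-1:ℝ) 0) (hq : q ∈ Set.Ioo (-1:ℝ) 0)
    (hpq : p + q = α - 2) (hr : r ∈ Set.Ioo (0:ℝ) 1)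
    (hrs : r * Real.sin (-(Real.pi * q)) = (1 - r) * Real.sin (-(Real.pi * p))) :
    ∀ x ∈ Set.Ioo (0:ℝ) 1,
      r * deriv (fun y : ℝ =>
            (1 / Real.Gamma (2 - α)) *
              ∫ s in (0:ℝ)..y, (y - s) ^ (1 - α) * (s ^ p * (1 - s) ^ q)) x
      + (1 - r) * deriv (fun y : ℝ =>
            (1 / Real.Gamma (2 - α)) *
              ∫ s in y..(1:ℝ), (s - y) ^ (1 - α) * (s ^ p * (1 - s) ^ q)) x = 0 := by
  obtain ⟨hα1, hα2⟩ := hα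
  obtain ⟨hp1, hp0⟩ := hp
  obtain ⟨hq1, hq0⟩ := hq
  obtain ⟨hr0, hr1⟩ := hr
  intro x hx
  obtain ⟨hx1, hx2⟩ := hx
  have hσ0 : (0:ℝ) < 2 - α := by linarith
  have hσ1 : (2:ℝ) - α < 1 := by linarith
  have hpq' : p + q = -(2 - α) := by linarith
  have hqp' : q + p = -(2 - α) := by linarith
  set c₁ : ℝ := ∫ v in Ioo (0:ℝ) 1, v ^ (-(2 - α)) * (1 - v) ^ (-q - 1) with hc₁
  set c₁' : ℝ := ∫ v in Ioo (0:ℝ) 1, v ^ (-(2 - α)) * (1 - v) ^ (-p - 1) with hc₁'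
  set c₂ : ℝ := ∫ v in Ioo (0:ℝ) 1, v ^ (-(2 - α)) * (1 - v) ^ ((2 - α) - 1) with hc₂
  have hc₁pos : 0 < c₁ := c1pos hσ0 hσ1 hq1 hq0
  have hc₁'pos : 0 < c₁' := c1pos hσ0 hσ1 hp1 hp0
  have hexp : (1:ℝ) - α = (2 - α) - 1 := by ring
  -- left derivative
  have hL : deriv (fun y : ℝ => (1 / Real.Gamma (2 - α)) *
        ∫ s in (0:ℝ)..y, (y - s) ^ (1 - α) * (s ^ p * (1 - s) ^ q)) x
      = (1 / Real.Gamma (2 - α)) * ((c₂ / c₁) * (x ^ (-q - 1) * (1 - x) ^ (-p - 1))) := by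
    simp only [hexp]
    rw [deriv_const_mul_field]
    congr 1
    exact (main2 hσ0 hσ1 hp1 hp0 hq1 hq0 hpq' hx1 hx2).deriv
  -- right derivative
  have hfun : (fun y : ℝ => (1 / Real.Gamma (2 - α)) *
        ∫ s in y..(1:ℝ), (s - y) ^ (1 - α) * (s ^ p * (1 - s) ^ q))
      = fun y : ℝ => (1 / Real.Gamma (2 - α)) *
        ∫ s in (0:ℝ)..(1 - y), ((1 - y) - s) ^ ((2 - α) - 1) * (s ^ q * (1 - s) ^ p) := by
    funext y
    congr 1
    have hcs := intervalIntegral.integral_comp_sub_left (a := 0) (b := 1 - y)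
      (fun s => (s - y) ^ (1 - α) * (s ^ p * (1 - s) ^ q)) 1
    simp only [sub_zero, sub_sub_cancel] at hcs
    rw [← hcs]
    apply intervalIntegral.integral_congr
    intro u _
    simp only
    rw [hexp]
    ring
  have hR : deriv (fun y : ℝ => (1 / Real.Gamma (2 - α)) *
        ∫ s in y..(1:ℝ), (s - y) ^ (1 - α) * (s ^ p * (1 - s) ^ q)) x
      = (1 / Real.Gamma (2 - α)) *
          (-((c₂ / c₁') * ((1 - x) ^ (-p - 1) * x ^ (-q - 1)))) := by
    rw [hfun, deriv_const_mul_field]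
    congr 1
    have h1x : 0 < 1 - x := by linarith
    have h1x2 : 1 - x < 1 := by linarith
    have hmain := main2 (q := p) (p := q) hσ0 hσ1 hq1 hq0 hp1 hp0 hqp' h1x h1x2
    have hinner : HasDerivAt (fun y : ℝ => 1 - y) (-1) x := by
      simpa using ((hasDerivAt_id x).const_sub 1)
    have hcd : HasDerivAt (fun y : ℝ => ∫ s in (0:ℝ)..(1 - y),
          ((1 - y) - s) ^ ((2 - α) - 1) * (s ^ q * (1 - s) ^ p))
        ((((∫ v in Ioo (0:ℝ) 1, v ^ (-(2 - α)) * (1 - v) ^ ((2 - α) - 1)) /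
          (∫ v in Ioo (0:ℝ) 1, v ^ (-(2 - α)) * (1 - v) ^ (-p - 1))) *
          ((1 - x) ^ (-p - 1) * (1 - (1 - x)) ^ (-q - 1))) * (-1)) x :=
      HasDerivAt.comp x hmain hinner
    rw [hcd.deriv, show (1:ℝ) - (1 - x) = x by ring]
    ring
  rw [hL, hR]
  -- Gamma computations
  have hβ1 : c₁ = Real.Gamma (1 - (2 - α)) * Real.Gamma (-q) / Real.Gamma (p + 1) := by
    have hb := realBeta (show (0:ℝ) < 1 - (2 - α) by linarith) (show (0:ℝ) < -q by linarith)
    rw [intervalIntegral.integral_of_le zero_le_one, integral_Ioc_eq_integral_Ioo] at hb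
    rw [show (1 - (2 - α)) + -q = p + 1 by linarith] at hb
    rw [hc₁, ← hb]
    apply setIntegral_congr_fun measurableSet_Ioo
    intro v hv
    rw [show (1 - (2 - α)) - 1 = -(2 - α) by ring, show -q - 1 = (-q) - 1 by ring]
  have hβ1' : c₁' = Real.Gamma (1 - (2 - α)) * Real.Gamma (-p) / Real.Gamma (q + 1) := by
    have hb := realBeta (show (0:ℝ) < 1 - (2 - α) by linarith) (show (0:ℝ) < -p by linarith)
    rw [intervalIntegral.integral_of_le zero_le_one, integral_Ioc_eq_integral_Ioo] at hb
    rw [show (1 - (2 - α)) + -p = q + 1 by linarith] at hb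
    rw [hc₁', ← hb]
    apply setIntegral_congr_fun measurableSet_Ioo
    intro v hv
    rw [show (1 - (2 - α)) - 1 = -(2 - α) by ring, show -p - 1 = (-p) - 1 by ring]
  -- reflection
  have hsp : 0 < Real.sin (-(Real.pi * p)) := by
    apply Real.sin_pos_of_pos_of_lt_pi
    · nlinarith [Real.pi_pos]
    · nlinarith [Real.pi_pos]
  have hsq : 0 < Real.sin (-(Real.pi * q)) := by
    apply Real.sin_pos_of_pos_of_lt_pi
    · nlinarith [Real.pi_pos]
    · nlinarith [Real.pi_pos]
  have hGp : Real.Gamma (p + 1) * Real.Gamma (-p) * Real.sin (-(Real.pi * p)) = Real.pi := by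
    have h := Real.Gamma_mul_Gamma_one_sub (p + 1)
    rw [show (1:ℝ) - (p + 1) = -p by ring] at h
    rw [h, show Real.pi * (p + 1) = Real.pi * p + Real.pi by ring, Real.sin_add_pi,
      ← Real.sin_neg]
    exact div_mul_cancel₀ _ hsp.ne'
  have hGq : Real.Gamma (q + 1) * Real.Gamma (-q) * Real.sin (-(Real.pi * q)) = Real.pi := by
    have h := Real.Gamma_mul_Gamma_one_sub (q + 1)
    rw [show (1:ℝ) - (q + 1) = -q by ring] at h
    rw [h, show Real.pi * (q + 1) = Real.pi * q + Real.pi by ring, Real.sin_add_pi,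
      ← Real.sin_neg]
    exact div_mul_cancel₀ _ hsq.ne'
  have hkey : r * (Real.Gamma (-p) * Real.Gamma (p + 1))
      = (1 - r) * (Real.Gamma (-q) * Real.Gamma (q + 1)) := by
    have h3 : r * (Real.Gamma (-p) * Real.Gamma (p + 1)) *
        (Real.sin (-(Real.pi * p)) * Real.sin (-(Real.pi * q)))
        = (1 - r) * (Real.Gamma (-q) * Real.Gamma (q + 1)) *
        (Real.sin (-(Real.pi * p)) * Real.sin (-(Real.pi * q))) := by
      linear_combination (r * Real.sin (-(Real.pi * q))) * hGp
        - ((1 - r) * Real.sin (-(Real.pi * p))) * hGq + Real.pi * hrs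
    exact mul_right_cancel₀ (by positivity) h3
  have hrel : r * c₁' = (1 - r) * c₁ := by
    rw [hβ1, hβ1']
    have hGq1 : 0 < Real.Gamma (q + 1) := Real.Gamma_pos_of_pos (by linarith)
    have hGp1 : 0 < Real.Gamma (p + 1) := Real.Gamma_pos_of_pos (by linarith)
    field_simp [hGq1.ne', hGp1.ne']
    linear_combination Real.Gamma (1 - (2 - α)) * hkey
  have hco : r * (c₂ / c₁) = (1 - r) * (c₂ / c₁') := by
    field_simp [hc₁pos.ne', hc₁'pos.ne']
    linear_combination c₂ * hrel
  linear_combination ((1 / Real.Gamma (2 - α)) * (x ^ (-q - 1) * (1 - x) ^ (-p - 1))) * hco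
end
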